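/- arXiv:2408.04444 — 4 statements merged into one kernel-verified Lean document; each statement's English description precedes it below -/
import Mathlib

section
/- Let q, α, β, x, y, t be complex numbers with |q| < 1, |xt| < 1, and |yt| < 1. Then Σ_{n=0}^{∞} Φ_n^{(α,β)}(x,y|q) t^n / (q;q)_n = (α x t;q)_∞ (β y t;q)_∞ / ((x t;q)_∞ (y t;q)_∞), the series converging absolutely. -/
set_option maxHeartbeats 1000000

/-- Finite q-Pochhammer symbol `(a;q)_n`. -/
noncomputable def qp (q a : ℂ) (n : ℕ) : ℂ := ∏ k ∈ Finset.range n, (1 - a * q ^ k)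

/-- Infinite q-Pochhammer symbol `(a;q)_∞`. -/
noncomputable def qpi (q a : ℂ) : ℂ := ∏' k : ℕ, (1 - a * q ^ k)

/-- Real finite q-Pochhammer symbol. -/
noncomputable def qpR (q a : ℝ) (n : ℕ) : ℝ := ∏ k ∈ Finset.range n, (1 - a * q ^ k)

/-- The q-functions `C_n^{(α,β)}(e^{iθ};q)`; for `α = β` these are the continuous
q-ultraspherical polynomials `C_n(cos θ; β | q)`. -/
noncomputable def Cab (q α β : ℂ) (n : ℕ) (θ : ℝ) : ℂ :=
  ∑ k ∈ Finset.range (n + 1),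
    qp q α k * qp q β (n - k) / (qp q q k * qp q q (n - k)) *
      Complex.exp (Complex.I * ((n : ℂ) - 2 * (k : ℂ)) * (θ : ℂ))

/-- The weight function `ω^{(α,β)}(cos θ | q)`; for `α = β` this is `ω_β(cos θ | q)`. -/
noncomputable def wab (q α β : ℂ) (θ : ℝ) : ℂ :=
  qpi q (Complex.exp (2 * Complex.I * (θ : ℂ))) *
      qpi q (Complex.exp (-(2 * Complex.I * (θ : ℂ)))) /
    (qpi q (α * Complex.exp (2 * Complex.I * (θ : ℂ))) *
      qpi q (β * Complex.exp (-(2 * Complex.I * (θ : ℂ)))))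

/-- The normalization constant `h_n(β|q)`. -/
noncomputable def hcst (q β : ℂ) (n : ℕ) : ℂ :=
  qpi q q * qpi q (β ^ 2) * qp q q n * (1 - β * q ^ n) /
    (2 * (Real.pi : ℂ) * (qpi q β * qpi q (β * q) * qp q (β ^ 2) n * (1 - β)))

/-- The homogeneous polynomials `Φ_n^{(a,b)}(x, y | q)`. -/
noncomputable def Phi (q a b : ℂ) (n : ℕ) (x y : ℂ) : ℂ :=
  ∑ k ∈ Finset.range (n + 1),
    qp q q n / (qp q q k * qp q q (n - k)) * qp q a k * qp q b (n - k) * x ^ k * y ^ (n - k)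

/-- The Jackson q-integral `∫_a^b f(z) d_q z`. -/
noncomputable def jackson (q a b : ℂ) (f : ℂ → ℂ) : ℂ :=
  (1 - q) * b * ∑' n : ℕ, q ^ n * f (b * q ^ n) -
    (1 - q) * a * ∑' n : ℕ, q ^ n * f (a * q ^ n)

open Filter Finset Topology

namespace QBinAux

/-- The coefficient `(a;q)_n / (q;q)_n`. -/
noncomputable def u (q a : ℂ) (n : ℕ) : ℂ := qp q a n / qp q q n

variable {q : ℂ}

lemma abs_lt_one (hq : ‖q‖ < 1) {z : ℂ} (hz : ‖z‖ < 1) (k : ℕ) :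
    ‖z * q ^ k‖ < 1 := by
  rw [norm_mul, norm_pow]
  calc ‖z‖ * ‖q‖ ^ k ≤ ‖z‖ * 1 :=
        mul_le_mul_of_nonneg_left (pow_le_one₀ (norm_nonneg q) hq.le)
          (norm_nonneg z)
    _ = ‖z‖ := mul_one _
    _ < 1 := hz

lemma factor_ne {w : ℂ} (h : ‖w‖ < 1) : (1 : ℂ) - w ≠ 0 := by
  intro h0
  have : w = 1 := by
    have := sub_eq_zero.mp h0
    exact this.symm
  rw [this] at h
  simp at h

lemma qq_ne (hq : ‖q‖ < 1) (n : ℕ) : qp q q n ≠ 0 := by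
  rw [qp]
  exact Finset.prod_ne_zero_iff.2 fun k _ => factor_ne (abs_lt_one hq hq k)

lemma u_rec (hq : ‖q‖ < 1) (a : ℂ) (n : ℕ) :
    u q a (n + 1) * (1 - q * q ^ n) = u q a n * (1 - a * q ^ n) := by
  have h1 : qp q a (n + 1) = qp q a n * (1 - a * q ^ n) := Finset.prod_range_succ _ n
  have h2 : qp q q (n + 1) = qp q q n * (1 - q * q ^ n) := Finset.prod_range_succ _ n
  have hn : qp q q n ≠ 0 := qq_ne hq n
  have hf : (1 : ℂ) - q * q ^ n ≠ 0 := factor_ne (abs_lt_one hq hq n)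
  rw [u, u, h1, h2, ← div_div]
  linear_combination (qp q a n * (1 - a * q ^ n) / qp q q n) * inv_mul_cancel₀ hf

lemma u_succ (hq : ‖q‖ < 1) (a : ℂ) (n : ℕ) :
    u q a (n + 1) = u q a n * (1 - a * q ^ n) / (1 - q * q ^ n) :=
  (eq_div_iff (factor_ne (abs_lt_one hq hq n))).2 (u_rec hq a n)

lemma summable_term (hq : ‖q‖ < 1) (a : ℂ) {z : ℂ} (hz : ‖z‖ < 1) :
    Summable fun n : ℕ => ‖u q a n * z ^ n‖ := by
  have hq0 : Tendsto (fun n : ℕ => q ^ n) atTop (𝓝 0) :=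
    tendsto_pow_atTop_nhds_zero_of_norm_lt_one (by exact hq)
  have h1 : Tendsto (fun n : ℕ => (1 - a * q ^ n) * z / (1 - q * q ^ n)) atTop (𝓝 z) := by
    have ha : Tendsto (fun n : ℕ => 1 - a * q ^ n) atTop (𝓝 1) := by
      simpa using tendsto_const_nhds.sub (hq0.const_mul a)
    have hb : Tendsto (fun n : ℕ => 1 - q * q ^ n) atTop (𝓝 1) := by
      simpa using tendsto_const_nhds.sub (hq0.const_mul q)
    simpa [Pi.div_def] using (ha.mul tendsto_const_nhds).div hb one_ne_zero
  have hg : Tendsto (fun n : ℕ => ‖(1 - a * q ^ n) * z / (1 - q * q ^ n)‖) atTop (𝓝 ‖z‖) :=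
    h1.norm
  set r : ℝ := (1 + ‖z‖) / 2 with hr
  have hzn : ‖z‖ < 1 := by exact hz
  have hr1 : r < 1 := by rw [hr]; linarith
  have hzr : ‖z‖ < r := by rw [hr]; linarith
  apply summable_of_ratio_norm_eventually_le hr1
  filter_upwards [hg.eventually (eventually_le_nhds hzr)] with n hn
  rw [Real.norm_of_nonneg (norm_nonneg _), Real.norm_of_nonneg (norm_nonneg _)]
  have hrec : u q a (n + 1) * z ^ (n + 1) =
      (u q a n * z ^ n) * ((1 - a * q ^ n) * z / (1 - q * q ^ n)) := by
    rw [u_succ hq a n, pow_succ]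
    ring
  rw [hrec, norm_mul, mul_comm]
  exact mul_le_mul_of_nonneg_right hn (norm_nonneg _)

lemma summable_log (hq : ‖q‖ < 1) (z : ℂ) :
    Summable fun k : ℕ => Complex.log (1 - z * q ^ k) := by
  have hq0 : Tendsto (fun k : ℕ => z * q ^ k) atTop (𝓝 0) := by
    simpa using (tendsto_pow_atTop_nhds_zero_of_norm_lt_one
      (x := q) (by exact hq)).const_mul z
  have hev : ∀ᶠ k in atTop, ‖z * q ^ k‖ ≤ 1 / 2 := by
    have h := hq0.norm
    rw [norm_zero] at h
    exact h.eventually (eventually_le_nhds (by norm_num))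
  have hs : Summable fun k : ℕ => 3 / 2 * ‖z * q ^ k‖ := by
    simp only [norm_mul, norm_pow]
    exact ((summable_geometric_of_lt_one (norm_nonneg q)
      (by exact hq)).mul_left _).mul_left _
  apply Summable.of_norm_bounded_eventually_nat hs
  filter_upwards [hev] with k hk
  have e : (1 : ℂ) - z * q ^ k = 1 + -(z * q ^ k) := by ring
  rw [e]
  have h2 := Complex.norm_log_one_add_half_le_self (z := -(z * q ^ k))
    (by rw [norm_neg]; exact hk)
  rwa [norm_neg] at h2

lemma hasProd_qpi (hq : ‖q‖ < 1) (z : ℂ) :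
    HasProd (fun k : ℕ => 1 - z * q ^ k) (qpi q z) := by
  by_cases hz0 : ∀ k : ℕ, (1 : ℂ) - z * q ^ k ≠ 0
  · have hm : Multipliable fun k : ℕ => 1 - z * q ^ k :=
      Complex.multipliable_of_summable_log (summable_log hq z)
    simpa [qpi] using hm.hasProd
  · push_neg at hz0
    obtain ⟨k0, hk0⟩ := hz0
    have h0 : HasProd (fun k : ℕ => 1 - z * q ^ k) 0 := by
      rw [HasProd]
      have hev : ∀ᶠ s : Finset ℕ in atTop,
          (0 : ℂ) = ∏ i ∈ s, (1 - z * q ^ i) := by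
        filter_upwards [eventually_ge_atTop ({k0} : Finset ℕ)] with s hs
        exact (Finset.prod_eq_zero (hs (Finset.mem_singleton_self k0)) hk0).symm
      exact Tendsto.congr' hev tendsto_const_nhds
    rw [qpi, h0.tprod_eq]
    exact h0

lemma qpi_ne (hq : ‖q‖ < 1) {z : ℂ} (hz : ‖z‖ < 1) : qpi q z ≠ 0 := by
  have hfn : ∀ (_ : Unit) (k : ℕ), (1 : ℂ) - z * q ^ k ≠ 0 :=
    fun _ k => factor_ne (abs_lt_one hq hz k)
  have h := Complex.cexp_tsum_eq_tprod (f := fun k => 1 - z * q ^ k) (hfn ())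
    (summable_log hq z)
  rw [qpi, ← h]
  exact Complex.exp_ne_zero _

lemma funct (hq : ‖q‖ < 1) (a : ℂ) {w : ℂ} (hw : ‖w‖ < 1) :
    (1 - w) * (∑' n : ℕ, u q a n * w ^ n) =
      (1 - a * w) * (∑' n : ℕ, u q a n * (q * w) ^ n) := by
  have hqw : ‖q * w‖ < 1 := by
    rw [norm_mul]
    calc ‖q‖ * ‖w‖ ≤ 1 * ‖w‖ :=
          mul_le_mul_of_nonneg_right hq.le (norm_nonneg w)
      _ = ‖w‖ := one_mul _
      _ < 1 := hw
  have h1 : Summable fun n : ℕ => u q a n * w ^ n := (summable_term hq a hw).of_norm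
  have h2 : Summable fun n : ℕ => u q a n * (q * w) ^ n := (summable_term hq a hqw).of_norm
  have h3 : Summable fun n : ℕ => u q a n * w ^ (n + 1) :=
    (h1.mul_left w).congr fun n => by ring
  have h4 : Summable fun n : ℕ => a * (u q a n * (q * w) ^ n) * w :=
    (h2.mul_left a).mul_right w
  have hshift : ∀ n : ℕ, u q a (n + 1) * w ^ (n + 1) - u q a (n + 1) * (q * w) ^ (n + 1) =
      u q a n * w ^ (n + 1) - a * (u q a n * (q * w) ^ n) * w := by
    intro n
    have hne : (1 : ℂ) - q * q ^ n ≠ 0 := factor_ne (abs_lt_one hq hq n)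
    rw [u_succ hq a n]
    linear_combination (u q a n * (1 - a * q ^ n) * w ^ (n + 1)) * inv_mul_cancel₀ hne
  have hg0 : u q a 0 * w ^ 0 - u q a 0 * (q * w) ^ 0 = 0 := by simp
  have main : (∑' n : ℕ, u q a n * w ^ n) - (∑' n : ℕ, u q a n * (q * w) ^ n) =
      w * (∑' n : ℕ, u q a n * w ^ n) - a * w * (∑' n : ℕ, u q a n * (q * w) ^ n) := by
    have e1 : w * ∑' n : ℕ, u q a n * w ^ n = ∑' n : ℕ, u q a n * w ^ (n + 1) := by
      rw [← tsum_mul_left]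
      exact tsum_congr fun n => by ring
    have e2 : a * w * ∑' n : ℕ, u q a n * (q * w) ^ n =
        ∑' n : ℕ, a * (u q a n * (q * w) ^ n) * w := by
      rw [← tsum_mul_left]
      exact tsum_congr fun n => by ring
    calc (∑' n : ℕ, u q a n * w ^ n) - (∑' n : ℕ, u q a n * (q * w) ^ n)
        = ∑' n : ℕ, (u q a n * w ^ n - u q a n * (q * w) ^ n) := (h1.tsum_sub h2).symm
      _ = ∑' n : ℕ, (u q a n * w ^ (n + 1) - a * (u q a n * (q * w) ^ n) * w) := by
          rw [(h1.sub h2).tsum_eq_zero_add, hg0, zero_add]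
          exact tsum_congr fun n => hshift n
      _ = (∑' n : ℕ, u q a n * w ^ (n + 1)) -
            ∑' n : ℕ, a * (u q a n * (q * w) ^ n) * w := h3.tsum_sub h4
      _ = w * (∑' n : ℕ, u q a n * w ^ n) -
            a * w * (∑' n : ℕ, u q a n * (q * w) ^ n) := by rw [← e1, ← e2]
  linear_combination main

lemma abs_pow_mul_lt (hq : ‖q‖ < 1) {z : ℂ} (hz : ‖z‖ < 1) (n : ℕ) :
    ‖q ^ n * z‖ < 1 := by
  rw [norm_mul, norm_pow]
  calc ‖q‖ ^ n * ‖z‖ ≤ 1 * ‖z‖ :=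
        mul_le_mul_of_nonneg_right (pow_le_one₀ (norm_nonneg q) hq.le)
          (norm_nonneg z)
    _ = ‖z‖ := one_mul _
    _ < 1 := hz

lemma qbinom (hq : ‖q‖ < 1) (a : ℂ) {z : ℂ} (hz : ‖z‖ < 1) :
    (∑' n : ℕ, u q a n * z ^ n) * qpi q z = qpi q (a * z) := by
  rcases eq_or_ne z 0 with rfl | hz0
  · have h1 : (∑' n : ℕ, u q a n * (0 : ℂ) ^ n) = 1 := by
      rw [tsum_eq_single 0 (fun n hn => by simp [zero_pow hn])]
      simp [u, qp]
    rw [h1, one_mul]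
    simp [qpi]
  -- iteration identity
  have hiter : ∀ n : ℕ, (∑' m : ℕ, u q a m * z ^ m) * (∏ k ∈ range n, (1 - z * q ^ k)) =
      (∏ k ∈ range n, (1 - a * z * q ^ k)) * (∑' m : ℕ, u q a m * (q ^ n * z) ^ m) := by
    intro n
    induction n with
    | zero => simp
    | succ n ih =>
      rw [prod_range_succ, prod_range_succ, ← mul_assoc, ih]
      have hwn : ‖q ^ n * z‖ < 1 := abs_pow_mul_lt hq hz n
      have hf := funct hq a hwn
      have e1 : q * (q ^ n * z) = q ^ (n + 1) * z := by ring
      have e2 : (1 : ℂ) - a * (q ^ n * z) = 1 - a * z * q ^ n := by ring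
      have e3 : (1 : ℂ) - q ^ n * z = 1 - z * q ^ n := by ring
      rw [e1, e2, e3] at hf
      linear_combination (∏ k ∈ range n, (1 - a * z * q ^ k)) * hf
  -- limits
  have hL : Tendsto (fun n : ℕ => (∑' m : ℕ, u q a m * z ^ m) *
      ∏ k ∈ range n, (1 - z * q ^ k)) atTop
      (𝓝 ((∑' m : ℕ, u q a m * z ^ m) * qpi q z)) :=
    ((hasProd_qpi hq z).tendsto_prod_nat).const_mul _
  have hK : Summable fun m : ℕ => ‖u q a (m + 1) * z ^ (m + 1)‖ :=
    (summable_nat_add_iff 1).2 (summable_term hq a hz)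
  set K := ∑' m : ℕ, ‖u q a (m + 1) * z ^ (m + 1)‖ with hKdef
  have hS1 : ∀ n : ℕ, ‖(∑' m : ℕ, u q a m * (q ^ n * z) ^ m) - 1‖ ≤
      ‖q‖ ^ n * K := by
    intro n
    have hwn : ‖q ^ n * z‖ < 1 := abs_pow_mul_lt hq hz n
    have hsum : Summable fun m : ℕ => u q a m * (q ^ n * z) ^ m :=
      (summable_term hq a hwn).of_norm
    have hs' : Summable fun m : ℕ => ‖u q a (m + 1) * (q ^ n * z) ^ (m + 1)‖ :=
      (summable_nat_add_iff 1).2 (summable_term hq a hwn)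
    have e0 : (∑' m : ℕ, u q a m * (q ^ n * z) ^ m) - 1 =
        ∑' m : ℕ, u q a (m + 1) * (q ^ n * z) ^ (m + 1) := by
      rw [hsum.tsum_eq_zero_add]
      have : u q a 0 * (q ^ n * z) ^ 0 = 1 := by simp [u, qp]
      rw [this]
      ring
    rw [e0]
    have hbound : ∀ m : ℕ, ‖u q a (m + 1) * (q ^ n * z) ^ (m + 1)‖ ≤
        ‖q‖ ^ n * ‖u q a (m + 1) * z ^ (m + 1)‖ := by
      intro m
      have hqn1 : (‖q‖ ^ n) ^ (m + 1) ≤ ‖q‖ ^ n :=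
        pow_le_of_le_one (by positivity)
          (pow_le_one₀ (norm_nonneg q) hq.le) (Nat.succ_ne_zero m)
      have hrw : ‖u q a (m + 1) * (q ^ n * z) ^ (m + 1)‖ =
          ‖u q a (m + 1)‖ * ((‖q‖ ^ n) ^ (m + 1) * ‖z‖ ^ (m + 1)) := by
        rw [norm_mul, norm_pow, norm_mul, norm_pow, mul_pow]
      have hrw2 : ‖u q a (m + 1) * z ^ (m + 1)‖ = ‖u q a (m + 1)‖ * ‖z‖ ^ (m + 1) := by
        rw [norm_mul, norm_pow]
      rw [hrw, hrw2]
      calc ‖u q a (m + 1)‖ * ((‖q‖ ^ n) ^ (m + 1) * ‖z‖ ^ (m + 1))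
          ≤ ‖u q a (m + 1)‖ * (‖q‖ ^ n * ‖z‖ ^ (m + 1)) := by
            apply mul_le_mul_of_nonneg_left _ (norm_nonneg _)
            exact mul_le_mul_of_nonneg_right hqn1 (by positivity)
        _ = ‖q‖ ^ n * (‖u q a (m + 1)‖ * ‖z‖ ^ (m + 1)) := by ring
    calc ‖∑' m : ℕ, u q a (m + 1) * (q ^ n * z) ^ (m + 1)‖
        ≤ ∑' m : ℕ, ‖u q a (m + 1) * (q ^ n * z) ^ (m + 1)‖ := norm_tsum_le_tsum_norm hs'
      _ ≤ ∑' m : ℕ, ‖q‖ ^ n * ‖u q a (m + 1) * z ^ (m + 1)‖ :=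
          Summable.tsum_le_tsum hbound hs' (hK.mul_left _)
      _ = ‖q‖ ^ n * K := by rw [tsum_mul_left]
  have hq0 : Tendsto (fun n : ℕ => ‖q‖ ^ n * K) atTop (𝓝 0) := by
    simpa using (tendsto_pow_atTop_nhds_zero_of_lt_one (norm_nonneg q) hq).mul_const K
  have hS1' : Tendsto (fun n : ℕ => ∑' m : ℕ, u q a m * (q ^ n * z) ^ m) atTop (𝓝 1) := by
    have h := squeeze_zero_norm hS1 hq0
    have := h.add_const 1
    simpa using this
  have hR : Tendsto (fun n : ℕ => (∏ k ∈ range n, (1 - a * z * q ^ k)) *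
      (∑' m : ℕ, u q a m * (q ^ n * z) ^ m)) atTop (𝓝 (qpi q (a * z) * 1)) :=
    ((hasProd_qpi hq (a * z)).tendsto_prod_nat).mul hS1'
  have hfin := tendsto_nhds_unique (hL.congr fun n => hiter n) hR
  simpa using hfin

end QBinAux

open QBinAux in
/-- Generating function for the homogeneous polynomials `Φ_n^{(α,β)}(x,y|q)`. -/
theorem stmt10 (q α β x y t : ℂ) (hq : ‖q‖ < 1) (hxt : ‖x * t‖ < 1)
    (hyt : ‖y * t‖ < 1) :
    Summable (fun n : ℕ => ‖Phi q α β n x y * t ^ n / qp q q n‖) ∧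
    ∑' n : ℕ, Phi q α β n x y * t ^ n / qp q q n =
      qpi q (α * x * t) * qpi q (β * y * t) / (qpi q (x * t) * qpi q (y * t)) := by
  have hA : Summable fun k : ℕ => ‖u q α k * (x * t) ^ k‖ := summable_term hq α hxt
  have hB : Summable fun k : ℕ => ‖u q β k * (y * t) ^ k‖ := summable_term hq β hyt
  have hid : ∀ n : ℕ, Phi q α β n x y * t ^ n / qp q q n =
      ∑ k ∈ range (n + 1), (u q α k * (x * t) ^ k) * (u q β (n - k) * (y * t) ^ (n - k)) := by
    intro n
    rw [Phi, Finset.sum_mul, Finset.sum_div]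
    apply Finset.sum_congr rfl
    intro k hk
    have hkn : k ≤ n := Nat.lt_succ_iff.mp (Finset.mem_range.mp hk)
    have ht : t ^ n = t ^ k * t ^ (n - k) := by
      rw [← pow_add, Nat.add_sub_cancel' hkn]
    have h1 : qp q q k ≠ 0 := qq_ne hq k
    have h2 : qp q q (n - k) ≠ 0 := qq_ne hq (n - k)
    have h3 : qp q q n ≠ 0 := qq_ne hq n
    rw [ht]
    simp only [u, mul_pow]
    field_simp
  constructor
  · exact (summable_norm_sum_mul_range_of_summable_norm hA hB).congr fun n => by rw [hid n]
  · have hABs := tsum_mul_tsum_eq_tsum_sum_range_of_summable_norm hA hB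
    have e : ∑' n : ℕ, Phi q α β n x y * t ^ n / qp q q n =
        (∑' k : ℕ, u q α k * (x * t) ^ k) * (∑' k : ℕ, u q β k * (y * t) ^ k) := by
      rw [hABs]
      exact tsum_congr hid
    rw [e]
    have hA1 : (∑' k : ℕ, u q α k * (x * t) ^ k) * qpi q (x * t) = qpi q (α * x * t) := by
      have := qbinom hq α hxt
      rwa [← mul_assoc] at this
    have hB1 : (∑' k : ℕ, u q β k * (y * t) ^ k) * qpi q (y * t) = qpi q (β * y * t) := by
      have := qbinom hq β hyt
      rwa [← mul_assoc] at this
    have hnx : qpi q (x * t) ≠ 0 := qpi_ne hq hxt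
    have hny : qpi q (y * t) ≠ 0 := qpi_ne hq hyt
    rw [eq_div_iff (mul_ne_zero hnx hny)]
    linear_combination (∑' k : ℕ, u q β k * (y * t) ^ k) * qpi q (y * t) * hA1 +
      qpi q (α * x * t) * hB1
end

section
/- Let q, α, t be complex numbers with |q| < 1, |α| < 1, and |t| < 1. Then Σ_{n=0}^{∞} q^n · [(q^{n+1};q)_∞ (α t q^n;q)_∞] / [(α q^n;q)_∞ (t q^n;q)_∞] = Σ_{n=0}^{∞} t^n / (1 − α q^n), both series converging absolutely. -/
open Complex Finset Filter Topology

namespace QAux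

lemma log_bound {r : ℝ} (hr : r < 1) {z : ℂ} (hz : ‖z‖ ≤ r) :
    ‖Complex.log (1 - z)‖ ≤ ((1 - r)⁻¹ / 2 + 1) * ‖z‖ := by
  have h0 : (0:ℝ) ≤ ‖z‖ := norm_nonneg z
  have hz1 : ‖z‖ < 1 := lt_of_le_of_lt hz hr
  have hneg : ‖-z‖ < 1 := by rwa [norm_neg]
  have h := Complex.norm_log_one_add_le hneg
  rw [norm_neg] at h
  have e : (1 : ℂ) + -z = 1 - z := by ring
  rw [e] at h
  refine h.trans ?_
  have h2 : (0:ℝ) < 1 - ‖z‖ := by linarith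
  have hinv : (1 - ‖z‖)⁻¹ ≤ (1 - r)⁻¹ := by
    apply inv_anti₀ (by linarith) (by linarith)
  nlinarith [mul_le_mul hz1.le hinv (inv_nonneg.mpr h2.le) zero_le_one]

/-- The master bound constant. -/
noncomputable def M (r : ℝ) : ℝ := ((1 - r)⁻¹ / 2 + 1) * (r * (1 - r)⁻¹)

lemma norm_exp_le_of_norm_le {w : ℂ} {m : ℝ} (h : ‖w‖ ≤ m) :
    Real.exp (-m) ≤ ‖Complex.exp w‖ ∧ ‖Complex.exp w‖ ≤ Real.exp m := by
  rw [Complex.norm_exp]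
  constructor
  · apply Real.exp_le_exp.mpr
    have := Complex.abs_re_le_norm w
    cases abs_le.mp this with
    | intro h1 h2 => linarith
  · apply Real.exp_le_exp.mpr
    have := Complex.abs_re_le_norm w
    cases abs_le.mp this with
    | intro h1 h2 => linarith


section basic

variable {q : ℂ} {r : ℝ} (hq : ‖q‖ ≤ r) (hr : r < 1) {a : ℂ} (ha : ‖a‖ ≤ r)

include hq hr ha

lemma arg_norm_le (k : ℕ) : ‖a * q ^ k‖ ≤ r * r ^ k := by
  have h0q : (0:ℝ) ≤ ‖q‖ := norm_nonneg q
  rw [norm_mul, norm_pow]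
  exact mul_le_mul ha (pow_le_pow_left₀ h0q hq k) (by positivity) ((norm_nonneg a).trans ha)

lemma arg_norm_le' (k : ℕ) : ‖a * q ^ k‖ ≤ r := by
  have h0r : (0:ℝ) ≤ r := (norm_nonneg a).trans ha
  refine (arg_norm_le hq hr ha k).trans ?_
  calc r * r ^ k ≤ r * 1 := by
        exact mul_le_mul_of_nonneg_left (pow_le_one₀ h0r hr.le) h0r
    _ = r := mul_one r

lemma factor_ne (k : ℕ) : 1 - a * q ^ k ≠ 0 := by
  intro h
  have h1 : a * q ^ k = 1 := by linear_combination -h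
  have h2 := arg_norm_le' hq hr ha k
  rw [h1, norm_one] at h2
  linarith

lemma term_log_bound (k : ℕ) :
    ‖Complex.log (1 - a * q ^ k)‖ ≤ ((1 - r)⁻¹ / 2 + 1) * (r * r ^ k) := by
  have h0r : (0:ℝ) ≤ r := (norm_nonneg a).trans ha
  have hc : (0:ℝ) ≤ (1 - r)⁻¹ / 2 + 1 := by
    have : (0:ℝ) ≤ (1 - r)⁻¹ := inv_nonneg.mpr (by linarith)
    linarith
  exact (log_bound hr (arg_norm_le' hq hr ha k)).trans
    (mul_le_mul_of_nonneg_left (arg_norm_le hq hr ha k) hc)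

lemma summable_norm_log :
    Summable fun k : ℕ => ‖Complex.log (1 - a * q ^ k)‖ := by
  have h0r : (0:ℝ) ≤ r := (norm_nonneg a).trans ha
  refine Summable.of_nonneg_of_le (fun k => norm_nonneg _) (term_log_bound hq hr ha) ?_
  exact ((summable_geometric_of_lt_one h0r hr).mul_left _).mul_left _

lemma summable_log :
    Summable fun k : ℕ => Complex.log (1 - a * q ^ k) :=
  (summable_norm_log hq hr ha).of_norm

lemma tsum_norm_log_le :
    ∑' k : ℕ, ‖Complex.log (1 - a * q ^ k)‖ ≤ M r := by
  have h0r : (0:ℝ) ≤ r := (norm_nonneg a).trans ha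
  have hgeo : Summable fun k : ℕ => ((1 - r)⁻¹ / 2 + 1) * (r * r ^ k) :=
    ((summable_geometric_of_lt_one h0r hr).mul_left _).mul_left _
  refine (Summable.tsum_le_tsum (term_log_bound hq hr ha) (summable_norm_log hq hr ha) hgeo).trans ?_
  rw [tsum_mul_left, tsum_mul_left, tsum_geometric_of_lt_one h0r hr, M]

lemma qp_eq_exp (n : ℕ) :
    qp q a n = Complex.exp (∑ k ∈ Finset.range n, Complex.log (1 - a * q ^ k)) := by
  rw [Complex.exp_sum, qp]
  exact Finset.prod_congr rfl fun k _ => (Complex.exp_log (factor_ne hq hr ha k)).symm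

lemma hasProd_qpi :
    HasProd (fun k : ℕ => 1 - a * q ^ k) (Complex.exp (∑' k : ℕ, Complex.log (1 - a * q ^ k))) := by
  have h := (summable_log hq hr ha).hasSum.cexp
  have e : (cexp ∘ fun k : ℕ => Complex.log (1 - a * q ^ k)) = fun k : ℕ => 1 - a * q ^ k := by
    funext k
    exact Complex.exp_log (factor_ne hq hr ha k)
  rwa [e] at h

lemma qpi_eq_exp :
    qpi q a = Complex.exp (∑' k : ℕ, Complex.log (1 - a * q ^ k)) :=
  (hasProd_qpi hq hr ha).tprod_eq

lemma hasProd_qpi' : HasProd (fun k : ℕ => 1 - a * q ^ k) (qpi q a) := by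
  rw [qpi_eq_exp hq hr ha]; exact hasProd_qpi hq hr ha

lemma qpi_ne : qpi q a ≠ 0 := by
  rw [qpi_eq_exp hq hr ha]; exact Complex.exp_ne_zero _

lemma qp_ne (n : ℕ) : qp q a n ≠ 0 := by
  rw [qp_eq_exp hq hr ha]; exact Complex.exp_ne_zero _

lemma norm_qpi_le : ‖qpi q a‖ ≤ Real.exp (M r) := by
  rw [qpi_eq_exp hq hr ha]
  refine (norm_exp_le_of_norm_le ?_).2
  exact (norm_tsum_le_tsum_norm (summable_norm_log hq hr ha)).trans (tsum_norm_log_le hq hr ha)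

lemma norm_qpi_ge : Real.exp (-(M r)) ≤ ‖qpi q a‖ := by
  rw [qpi_eq_exp hq hr ha]
  refine (norm_exp_le_of_norm_le ?_).1
  exact (norm_tsum_le_tsum_norm (summable_norm_log hq hr ha)).trans (tsum_norm_log_le hq hr ha)

lemma norm_qp_le (n : ℕ) : ‖qp q a n‖ ≤ Real.exp (M r) := by
  rw [qp_eq_exp hq hr ha]
  refine (norm_exp_le_of_norm_le ?_).2
  refine (norm_sum_le _ _).trans ?_
  refine (Summable.sum_le_tsum _ (fun k _ => norm_nonneg _) (summable_norm_log hq hr ha)).trans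
    (tsum_norm_log_le hq hr ha)

lemma norm_qp_ge (n : ℕ) : Real.exp (-(M r)) ≤ ‖qp q a n‖ := by
  rw [qp_eq_exp hq hr ha]
  refine (norm_exp_le_of_norm_le ?_).1
  refine (norm_sum_le _ _).trans ?_
  refine (Summable.sum_le_tsum _ (fun k _ => norm_nonneg _) (summable_norm_log hq hr ha)).trans
    (tsum_norm_log_le hq hr ha)

lemma qpi_shift (n : ℕ) : qpi q a = qp q a n * qpi q (a * q ^ n) := by
  have ha' : ‖a * q ^ n‖ ≤ r := arg_norm_le' hq hr ha n
  rw [qpi_eq_exp hq hr ha, qp_eq_exp hq hr ha, qpi_eq_exp hq hr ha',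
    ← Complex.exp_add]
  congr 1
  rw [← Summable.sum_add_tsum_nat_add n (summable_log hq hr ha)]
  congr 1
  apply tsum_congr
  intro k
  congr 2
  rw [mul_assoc, ← pow_add]
  ring_nf

end basic

section qbinom

variable {q : ℂ} {r : ℝ} (hq : ‖q‖ ≤ r) (hr : r < 1) {a : ℂ} (ha : ‖a‖ ≤ r)

include hq hr ha

lemma norm_c_le (m : ℕ) :
    ‖qp q a m / qp q q m‖ ≤ Real.exp (M r) / Real.exp (-(M r)) := by
  rw [norm_div]
  exact div_le_div₀ (Real.exp_pos _).le (norm_qp_le hq hr ha m) (Real.exp_pos _)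
    (norm_qp_ge hq hr hq m)

lemma summable_c {z : ℂ} (hz : ‖z‖ < 1) :
    Summable (fun m : ℕ => qp q a m / qp q q m * z ^ m) := by
  refine Summable.of_norm (Summable.of_nonneg_of_le (fun m => norm_nonneg _) (fun m => ?_)
    ((summable_geometric_of_lt_one (norm_nonneg z) hz).mul_left
      (Real.exp (M r) / Real.exp (-(M r)))))
  rw [norm_mul, norm_pow]
  exact mul_le_mul_of_nonneg_right (norm_c_le hq hr ha m) (by positivity)

lemma c_rec (m : ℕ) :
    qp q a (m + 1) / qp q q (m + 1) * (1 - q ^ (m + 1))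
      = qp q a m / qp q q m * (1 - a * q ^ m) := by
  have e1 : qp q a (m + 1) = qp q a m * (1 - a * q ^ m) := Finset.prod_range_succ _ m
  have e2 : qp q q (m + 1) = qp q q m * (1 - q ^ (m + 1)) := by
    rw [qp, Finset.prod_range_succ, ← qp, pow_succ]
    ring
  have h3 : qp q q m ≠ 0 := qp_ne hq hr hq m
  have h4 : (1 : ℂ) - q ^ (m + 1) ≠ 0 := by
    have := factor_ne hq hr hq m
    rw [← pow_succ'] at this
    exact this
  rw [e1, e2]
  field_simp

set_option maxHeartbeats 1000000 in
lemma funEq {w : ℂ} (hw : ‖w‖ < 1) :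
    (1 - w) * ∑' m : ℕ, qp q a m / qp q q m * w ^ m
      = (1 - a * w) * ∑' m : ℕ, qp q a m / qp q q m * (q * w) ^ m := by
  set c : ℕ → ℂ := fun m => qp q a m / qp q q m with hc
  have hqw : ‖q * w‖ < 1 := by
    rw [norm_mul]
    calc ‖q‖ * ‖w‖ ≤ 1 * ‖w‖ := by
          exact mul_le_mul_of_nonneg_right (hq.trans hr.le) (norm_nonneg w)
      _ = ‖w‖ := one_mul _
      _ < 1 := hw
  have hS : Summable fun m : ℕ => c m * w ^ m := summable_c hq hr ha hw
  have hT : Summable fun m : ℕ => c m * (q * w) ^ m := summable_c hq hr ha hqw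
  have hS1 : Summable fun m : ℕ => c (m + 1) * w ^ (m + 1) :=
    (summable_nat_add_iff 1).mpr hS
  have hT1 : Summable fun m : ℕ => c (m + 1) * (q * w) ^ (m + 1) :=
    (summable_nat_add_iff 1).mpr hT
  have hwS : Summable fun m : ℕ => w * (c m * w ^ m) := hS.mul_left w
  have hawT : Summable fun m : ℕ => (a * w) * (c m * (q * w) ^ m) := hT.mul_left (a * w)
  have eS : ∑' m : ℕ, c m * w ^ m = c 0 * w ^ 0 + ∑' m : ℕ, c (m + 1) * w ^ (m + 1) :=
    Summable.tsum_eq_zero_add hS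
  have eT : ∑' m : ℕ, c m * (q * w) ^ m
      = c 0 * (q * w) ^ 0 + ∑' m : ℕ, c (m + 1) * (q * w) ^ (m + 1) :=
    Summable.tsum_eq_zero_add hT
  have ewS : w * ∑' m : ℕ, c m * w ^ m = ∑' m : ℕ, w * (c m * w ^ m) := (tsum_mul_left).symm
  have eawT : (a * w) * ∑' m : ℕ, c m * (q * w) ^ m
      = ∑' m : ℕ, (a * w) * (c m * (q * w) ^ m) := (tsum_mul_left).symm
  have lhs_eq : (1 - w) * ∑' m : ℕ, c m * w ^ m
      = c 0 * w ^ 0 + (∑' m : ℕ, (c (m + 1) * w ^ (m + 1) - w * (c m * w ^ m))) := by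
    rw [Summable.tsum_sub hS1 hwS, sub_mul, one_mul, ewS, eS]
    ring
  have rhs_eq : (1 - a * w) * ∑' m : ℕ, c m * (q * w) ^ m
      = c 0 * (q * w) ^ 0
        + (∑' m : ℕ, (c (m + 1) * (q * w) ^ (m + 1) - (a * w) * (c m * (q * w) ^ m))) := by
    rw [Summable.tsum_sub hT1 hawT, sub_mul, one_mul, eawT, eT]
    ring
  rw [lhs_eq, rhs_eq, pow_zero, pow_zero]
  congr 1
  apply tsum_congr
  intro m
  have hrec : c (m + 1) * (1 - q ^ (m + 1)) = c m * (1 - a * q ^ m) := c_rec hq hr ha m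
  linear_combination w ^ (m + 1) * hrec

lemma iterEq {z : ℂ} (hz : ‖z‖ < 1) (N : ℕ) :
    ∑' m : ℕ, qp q a m / qp q q m * z ^ m
      = ((∏ k ∈ Finset.range N, (1 - a * z * q ^ k))
          / (∏ k ∈ Finset.range N, (1 - z * q ^ k)))
        * ∑' m : ℕ, qp q a m / qp q q m * (q ^ N * z) ^ m := by
  induction N with
  | zero => simp
  | succ N ih =>
    have hwn : ‖q ^ N * z‖ < 1 := by
      rw [norm_mul, norm_pow]
      calc ‖q‖ ^ N * ‖z‖ ≤ 1 * ‖z‖ := by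
            exact mul_le_mul_of_nonneg_right (pow_le_one₀ (norm_nonneg q) (hq.trans hr.le))
              (norm_nonneg z)
        _ = ‖z‖ := one_mul _
        _ < 1 := hz
    have hfe := funEq hq hr ha hwn
    have h1 : (1 : ℂ) - q ^ N * z ≠ 0 := by
      intro h
      have h1' : q ^ N * z = 1 := by linear_combination -h
      have : ‖q ^ N * z‖ = 1 := by rw [h1']; exact norm_one
      rw [this] at hwn; exact lt_irrefl 1 hwn
    have step : ∑' m : ℕ, qp q a m / qp q q m * (q ^ N * z) ^ m
        = ((1 - a * z * q ^ N) / (1 - z * q ^ N))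
          * ∑' m : ℕ, qp q a m / qp q q m * (q ^ (N + 1) * z) ^ m := by
      have e1 : q * (q ^ N * z) = q ^ (N + 1) * z := by ring
      have e2 : a * (q ^ N * z) = a * z * q ^ N := by ring
      have e3 : (1:ℂ) - z * q ^ N = 1 - q ^ N * z := by ring
      have h1' : (1:ℂ) - z * q ^ N ≠ 0 := by rw [e3]; exact h1
      rw [e1, e2] at hfe
      rw [div_mul_eq_mul_div, eq_div_iff h1']
      linear_combination hfe
    rw [ih, step, Finset.prod_range_succ, Finset.prod_range_succ,
      ← mul_assoc, div_mul_div_comm]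

set_option maxHeartbeats 1000000 in
lemma tail_tendsto {z : ℂ} (hz : ‖z‖ < 1) :
    Tendsto (fun N : ℕ => ∑' m : ℕ, qp q a m / qp q q m * (q ^ N * z) ^ m) atTop (𝓝 1) := by
  have hq1 : ‖q‖ < 1 := lt_of_le_of_lt hq hr
  have hz' : (0:ℝ) < 1 - ‖z‖ := by linarith
  set K := Real.exp (M r) / Real.exp (-(M r)) with hK
  have hK0 : (0:ℝ) ≤ K := by positivity
  have hwn : ∀ N : ℕ, ‖q ^ N * z‖ < 1 := by
    intro N
    rw [norm_mul, norm_pow]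
    calc ‖q‖ ^ N * ‖z‖ ≤ 1 * ‖z‖ :=
          mul_le_mul_of_nonneg_right (pow_le_one₀ (norm_nonneg q) hq1.le) (norm_nonneg z)
      _ = ‖z‖ := one_mul _
      _ < 1 := hz
  have hbound : ∀ N : ℕ, ‖(∑' m : ℕ, qp q a m / qp q q m * (q ^ N * z) ^ m) - 1‖
      ≤ (K * (‖z‖ * (1 - ‖z‖)⁻¹)) * ‖q‖ ^ N := by
    intro N
    have hSN : Summable (fun m : ℕ => qp q a m / qp q q m * (q ^ N * z) ^ m) :=
      summable_c hq hr ha (hwn N)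
    have e0 : qp q a 0 / qp q q 0 * (q ^ N * z) ^ 0 = 1 := by simp [qp]
    have eS := Summable.tsum_eq_zero_add hSN
    rw [e0] at eS
    have e1 : (∑' m : ℕ, qp q a m / qp q q m * (q ^ N * z) ^ m) - 1
        = ∑' m : ℕ, qp q a (m + 1) / qp q q (m + 1) * (q ^ N * z) ^ (m + 1) := by
      rw [eS]; ring
    rw [e1]
    have hsum1 : Summable (fun m : ℕ => qp q a (m + 1) / qp q q (m + 1) * (q ^ N * z) ^ (m + 1)) :=
      (summable_nat_add_iff 1).mpr hSN
    refine (norm_tsum_le_tsum_norm hsum1.norm).trans ?_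
    have hterm : ∀ m : ℕ, ‖qp q a (m + 1) / qp q q (m + 1) * (q ^ N * z) ^ (m + 1)‖
        ≤ K * (‖q‖ ^ N * ‖z‖ ^ (m + 1)) := by
      intro m
      rw [norm_mul, norm_pow, norm_mul, norm_pow]
      have h1 : (‖q‖ ^ N * ‖z‖) ^ (m + 1) ≤ ‖q‖ ^ N * ‖z‖ ^ (m + 1) := by
        rw [mul_pow]
        refine mul_le_mul_of_nonneg_right ?_ (by positivity)
        calc (‖q‖ ^ N) ^ (m + 1) ≤ (‖q‖ ^ N) ^ 1 :=
              pow_le_pow_of_le_one (by positivity) (pow_le_one₀ (norm_nonneg q) hq1.le)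
                (Nat.one_le_iff_ne_zero.mpr (Nat.succ_ne_zero m))
          _ = ‖q‖ ^ N := pow_one _
      exact mul_le_mul (norm_c_le hq hr ha (m + 1)) h1 (by positivity) hK0
    have hgeo : Summable (fun m : ℕ => K * (‖q‖ ^ N * ‖z‖ ^ (m + 1))) := by
      have : Summable (fun m : ℕ => ‖z‖ ^ (m + 1)) := by
        simpa [pow_succ'] using (summable_geometric_of_lt_one (norm_nonneg z) hz).mul_left ‖z‖
      exact (this.mul_left _).mul_left _
    refine (Summable.tsum_le_tsum hterm hsum1.norm hgeo).trans ?_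
    have : ∑' m : ℕ, K * (‖q‖ ^ N * ‖z‖ ^ (m + 1)) = K * (‖q‖ ^ N * (‖z‖ * (1 - ‖z‖)⁻¹)) := by
      rw [tsum_mul_left, tsum_mul_left]
      congr 2
      have : ∀ m : ℕ, ‖z‖ ^ (m + 1) = ‖z‖ * ‖z‖ ^ m := fun m => by rw [pow_succ]; ring
      rw [tsum_congr this, tsum_mul_left, tsum_geometric_of_lt_one (norm_nonneg z) hz,
        inv_eq_one_div]
    rw [this]
    ring_nf
    exact le_refl _
  have h0 : Tendsto (fun N : ℕ => (K * (‖z‖ * (1 - ‖z‖)⁻¹)) * ‖q‖ ^ N) atTop (𝓝 0) := by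
    simpa using (tendsto_pow_atTop_nhds_zero_of_lt_one (norm_nonneg q) hq1).const_mul
      (K * (‖z‖ * (1 - ‖z‖)⁻¹))
  have hsq := squeeze_zero_norm hbound h0
  have := hsq.add_const 1
  simpa using this

set_option maxHeartbeats 1000000 in
lemma qbinom {z : ℂ} (hz : ‖z‖ ≤ r) :
    HasSum (fun m : ℕ => qp q a m / qp q q m * z ^ m) (qpi q (a * z) / qpi q z) := by
  have hr0 : (0:ℝ) ≤ r := le_trans (norm_nonneg q) hq
  have hz1 : ‖z‖ < 1 := lt_of_le_of_lt hz hr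
  have haz : ‖a * z‖ ≤ r := by
    rw [norm_mul]
    calc ‖a‖ * ‖z‖ ≤ r * 1 := mul_le_mul ha hz1.le (norm_nonneg z) hr0
      _ = r := mul_one r
  have hS : Summable (fun m : ℕ => qp q a m / qp q q m * z ^ m) := summable_c hq hr ha hz1
  refine (Summable.hasSum_iff hS).mpr ?_
  have hnum : Tendsto (fun N : ℕ => ∏ k ∈ Finset.range N, (1 - a * z * q ^ k)) atTop
      (𝓝 (qpi q (a * z))) := (hasProd_qpi' hq hr haz).tendsto_prod_nat
  have hden : Tendsto (fun N : ℕ => ∏ k ∈ Finset.range N, (1 - z * q ^ k)) atTop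
      (𝓝 (qpi q z)) := (hasProd_qpi' hq hr hz).tendsto_prod_nat
  have htail := tail_tendsto hq hr ha hz1
  have hlim : Tendsto (fun N : ℕ =>
      ((∏ k ∈ Finset.range N, (1 - a * z * q ^ k)) / (∏ k ∈ Finset.range N, (1 - z * q ^ k)))
        * ∑' m : ℕ, qp q a m / qp q q m * (q ^ N * z) ^ m) atTop
      (𝓝 (qpi q (a * z) / qpi q z * 1)) :=
    (hnum.div hden (qpi_ne hq hr hz)).mul htail
  rw [mul_one] at hlim
  have hconst : (fun N : ℕ =>
      ((∏ k ∈ Finset.range N, (1 - a * z * q ^ k)) / (∏ k ∈ Finset.range N, (1 - z * q ^ k)))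
        * ∑' m : ℕ, qp q a m / qp q q m * (q ^ N * z) ^ m)
      = fun _ : ℕ => ∑' m : ℕ, qp q a m / qp q q m * z ^ m :=
    funext fun N => (iterEq hq hr ha hz1 N).symm
  rw [hconst] at hlim
  exact tendsto_nhds_unique tendsto_const_nhds hlim

end qbinom


end QAux

/-- Evaluation of `λ₀`: `Σ qⁿ (q^{n+1};q)_∞ (αtqⁿ;q)_∞ / ((αqⁿ;q)_∞ (tqⁿ;q)_∞)
    = Σ tⁿ/(1-αqⁿ)`, both series converging absolutely. -/
theorem stmt11 (q α t : ℂ) (hq : ‖q‖ < 1) (hα : ‖α‖ < 1)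
    (ht : ‖t‖ < 1) :
    Summable (fun n : ℕ =>
        ‖q ^ n * (qpi q (q ^ (n + 1)) * qpi q (α * t * q ^ n)) /
          (qpi q (α * q ^ n) * qpi q (t * q ^ n))‖) ∧
    Summable (fun n : ℕ => ‖t ^ n / (1 - α * q ^ n)‖) ∧
    ∑' n : ℕ,
        q ^ n * (qpi q (q ^ (n + 1)) * qpi q (α * t * q ^ n)) /
          (qpi q (α * q ^ n) * qpi q (t * q ^ n)) =
      ∑' n : ℕ, t ^ n / (1 - α * q ^ n) := by
  have hqn : ‖q‖ < 1 := by exact hq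
  have hαn : ‖α‖ < 1 := by exact hα
  have htn : ‖t‖ < 1 := by exact ht
  set r : ℝ := max ‖q‖ (max ‖α‖ ‖t‖) with hrdef
  have hr : r < 1 := by
    rw [hrdef]; exact max_lt hqn (max_lt hαn htn)
  have hqr : ‖q‖ ≤ r := le_max_left _ _
  have hαr : ‖α‖ ≤ r := le_trans (le_max_left _ _) (le_max_right _ _)
  have htr : ‖t‖ ≤ r := le_trans (le_max_right _ _) (le_max_right _ _)
  have hr0 : (0:ℝ) ≤ r := (norm_nonneg q).trans hqr
  have hq1r : ∀ n : ℕ, ‖q ^ (n + 1)‖ ≤ r := fun n => by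
    rw [norm_pow]
    exact le_trans (pow_le_of_le_one (norm_nonneg q) hqn.le (Nat.succ_ne_zero n)) hqr
  have hαq : ∀ n : ℕ, ‖α * q ^ n‖ ≤ r := fun n => QAux.arg_norm_le' hqr hr hαr n
  have htq : ∀ n : ℕ, ‖t * q ^ n‖ ≤ r := fun n => QAux.arg_norm_le' hqr hr htr n
  have hαtr : ‖α * t‖ ≤ r := by
    rw [norm_mul]
    calc ‖α‖ * ‖t‖ ≤ r * 1 := mul_le_mul hαr htn.le (norm_nonneg t) hr0
      _ = r := mul_one r
  have hαtq : ∀ n : ℕ, ‖α * t * q ^ n‖ ≤ r := fun n => QAux.arg_norm_le' hqr hr hαtr n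
  have hE0 : (0:ℝ) < Real.exp (QAux.M r) := Real.exp_pos _
  have hE'0 : (0:ℝ) < Real.exp (-(QAux.M r)) := Real.exp_pos _
  -- first summability claim
  have claim1 : Summable (fun n : ℕ =>
      ‖q ^ n * (qpi q (q ^ (n + 1)) * qpi q (α * t * q ^ n)) /
        (qpi q (α * q ^ n) * qpi q (t * q ^ n))‖) := by
    refine Summable.of_nonneg_of_le (fun n => norm_nonneg _) (fun n => ?_)
      ((summable_geometric_of_lt_one (norm_nonneg q) hqn).mul_left
        (Real.exp (QAux.M r) * Real.exp (QAux.M r) /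
          (Real.exp (-(QAux.M r)) * Real.exp (-(QAux.M r)))))
    rw [norm_div, norm_mul, norm_mul, norm_mul, norm_pow]
    have h12 : ‖qpi q (q ^ (n + 1))‖ * ‖qpi q (α * t * q ^ n)‖
        ≤ Real.exp (QAux.M r) * Real.exp (QAux.M r) :=
      mul_le_mul (QAux.norm_qpi_le hqr hr (hq1r n)) (QAux.norm_qpi_le hqr hr (hαtq n))
        (norm_nonneg _) hE0.le
    have h34 : Real.exp (-(QAux.M r)) * Real.exp (-(QAux.M r))
        ≤ ‖qpi q (α * q ^ n)‖ * ‖qpi q (t * q ^ n)‖ :=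
      mul_le_mul (QAux.norm_qpi_ge hqr hr (hαq n)) (QAux.norm_qpi_ge hqr hr (htq n))
        hE'0.le (norm_nonneg _)
    calc ‖q‖ ^ n * (‖qpi q (q ^ (n + 1))‖ * ‖qpi q (α * t * q ^ n)‖)
          / (‖qpi q (α * q ^ n)‖ * ‖qpi q (t * q ^ n)‖)
        ≤ ‖q‖ ^ n * (Real.exp (QAux.M r) * Real.exp (QAux.M r))
            / (Real.exp (-(QAux.M r)) * Real.exp (-(QAux.M r))) :=
          div_le_div₀ (by positivity) (mul_le_mul_of_nonneg_left h12 (by positivity))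
            (by positivity) h34
      _ = Real.exp (QAux.M r) * Real.exp (QAux.M r) /
            (Real.exp (-(QAux.M r)) * Real.exp (-(QAux.M r))) * ‖q‖ ^ n := by ring
  -- second summability claim
  have hden2 : ∀ n : ℕ, (1:ℝ) - ‖α‖ ≤ ‖1 - α * q ^ n‖ := by
    intro n
    have h1 : ‖α * q ^ n‖ ≤ ‖α‖ := by
      rw [norm_mul, norm_pow]
      calc ‖α‖ * ‖q‖ ^ n ≤ ‖α‖ * 1 :=
            mul_le_mul_of_nonneg_left (pow_le_one₀ (norm_nonneg q) hqn.le) (norm_nonneg α)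
        _ = ‖α‖ := mul_one _
    calc (1:ℝ) - ‖α‖ ≤ ‖(1:ℂ)‖ - ‖α * q ^ n‖ := by rw [norm_one]; linarith
      _ ≤ ‖1 - α * q ^ n‖ := norm_sub_norm_le _ _
  have claim2 : Summable (fun n : ℕ => ‖t ^ n / (1 - α * q ^ n)‖) := by
    refine Summable.of_nonneg_of_le (fun n => norm_nonneg _) (fun n => ?_)
      ((summable_geometric_of_lt_one (norm_nonneg t) htn).mul_left ((1 - ‖α‖)⁻¹))
    rw [norm_div, norm_pow]
    calc ‖t‖ ^ n / ‖1 - α * q ^ n‖ ≤ ‖t‖ ^ n / (1 - ‖α‖) :=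
          div_le_div₀ (by positivity) le_rfl (by linarith) (hden2 n)
      _ = (1 - ‖α‖)⁻¹ * ‖t‖ ^ n := by ring
  -- row sums
  have hrows : ∀ n : ℕ, HasSum
      (fun m : ℕ => q ^ n * (qpi q (q ^ (n + 1)) / qpi q (α * q ^ n))
        * (qp q α m / qp q q m * (t * q ^ n) ^ m))
      (q ^ n * (qpi q (q ^ (n + 1)) * qpi q (α * t * q ^ n)) /
        (qpi q (α * q ^ n) * qpi q (t * q ^ n))) := by
    intro n
    have hb := (QAux.qbinom hqr hr hαr (htq n)).mul_left
      (q ^ n * (qpi q (q ^ (n + 1)) / qpi q (α * q ^ n)))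
    have hval : q ^ n * (qpi q (q ^ (n + 1)) / qpi q (α * q ^ n))
        * (qpi q (α * (t * q ^ n)) / qpi q (t * q ^ n))
        = q ^ n * (qpi q (q ^ (n + 1)) * qpi q (α * t * q ^ n)) /
          (qpi q (α * q ^ n) * qpi q (t * q ^ n)) := by
      rw [← mul_assoc α t (q ^ n)]
      ring
    rwa [hval] at hb
  -- column sums
  have hcols : ∀ m : ℕ, HasSum
      (fun n : ℕ => q ^ n * (qpi q (q ^ (n + 1)) / qpi q (α * q ^ n))
        * (qp q α m / qp q q m * (t * q ^ n) ^ m))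
      (t ^ m / (1 - α * q ^ m)) := by
    intro m
    have hb := (QAux.qbinom hqr hr hαr (hq1r m)).mul_left
      (qp q α m / qp q q m * t ^ m * (qpi q q / qpi q α))
    have hfun : ∀ n : ℕ, qp q α m / qp q q m * t ^ m * (qpi q q / qpi q α)
        * (qp q α n / qp q q n * (q ^ (m + 1)) ^ n)
        = q ^ n * (qpi q (q ^ (n + 1)) / qpi q (α * q ^ n))
          * (qp q α m / qp q q m * (t * q ^ n) ^ m) := by
      intro n
      have e1 : qpi q q = qp q q n * qpi q (q ^ (n + 1)) := by
        have h := QAux.qpi_shift hqr hr hqr n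
        rwa [← pow_succ'] at h
      have e2 : qpi q α = qp q α n * qpi q (α * q ^ n) := QAux.qpi_shift hqr hr hαr n
      have f1 : qpi q (q ^ (n + 1)) = qpi q q / qp q q n := by
        rw [eq_div_iff (QAux.qp_ne hqr hr hqr n)]
        linear_combination -e1
      have f2 : qpi q (α * q ^ n) = qpi q α / qp q α n := by
        rw [eq_div_iff (QAux.qp_ne hqr hr hαr n)]
        linear_combination -e2
      rw [f1, f2]
      have h1 := QAux.qp_ne hqr hr hqr n
      have h2 := QAux.qp_ne hqr hr hαr n
      have h3 := QAux.qp_ne hqr hr hqr m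
      have h4 := QAux.qpi_ne hqr hr hαr
      field_simp
      ring
    have hval : qp q α m / qp q q m * t ^ m * (qpi q q / qpi q α)
        * (qpi q (α * q ^ (m + 1)) / qpi q (q ^ (m + 1)))
        = t ^ m / (1 - α * q ^ m) := by
      have g1 : qpi q α = qp q α (m + 1) * qpi q (α * q ^ (m + 1)) :=
        QAux.qpi_shift hqr hr hαr (m + 1)
      have g2 : qpi q q = qp q q m * qpi q (q ^ (m + 1)) := by
        have h := QAux.qpi_shift hqr hr hqr m
        rwa [← pow_succ'] at h
      have g3 : qp q α (m + 1) = qp q α m * (1 - α * q ^ m) := Finset.prod_range_succ _ m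
      have n1 := QAux.qp_ne hqr hr hαr m
      have n2 := QAux.qp_ne hqr hr hqr m
      have n3 := QAux.factor_ne hqr hr hαr m
      have n4 := QAux.qpi_ne hqr hr (hαq (m + 1))
      have n5 := QAux.qpi_ne hqr hr (hq1r m)
      have e2' : qpi q q / qpi q (q ^ (m + 1)) = qp q q m := by
        rw [g2, mul_div_assoc, div_self n5, mul_one]
      have e1' : qpi q (α * q ^ (m + 1)) / qpi q α = (qp q α m * (1 - α * q ^ m))⁻¹ := by
        rw [g1, g3, mul_comm (qp q α m * (1 - α * q ^ m)) (qpi q (α * q ^ (m + 1))),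
          div_mul_cancel_left₀ n4]
      have hre : qp q α m / qp q q m * t ^ m * (qpi q q / qpi q α)
          * (qpi q (α * q ^ (m + 1)) / qpi q (q ^ (m + 1)))
          = qp q α m / qp q q m * t ^ m * ((qpi q q / qpi q (q ^ (m + 1)))
            * (qpi q (α * q ^ (m + 1)) / qpi q α)) := by ring
      rw [hre, e2', e1']
      field_simp
    simp only [hfun] at hb
    rwa [hval] at hb
  -- Fubini
  have hF : Summable (Function.uncurry
      (fun n m : ℕ => q ^ n * (qpi q (q ^ (n + 1)) / qpi q (α * q ^ n))
        * (qp q α m / qp q q m * (t * q ^ n) ^ m))) := by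
    refine Summable.of_norm (Summable.of_nonneg_of_le (fun p => norm_nonneg _)
      (fun p => ?_)
      (Summable.mul_left (Real.exp (QAux.M r) / Real.exp (-(QAux.M r))
          * (Real.exp (QAux.M r) / Real.exp (-(QAux.M r))))
        ((summable_geometric_of_lt_one (norm_nonneg q) hqn).mul_of_nonneg
        (summable_geometric_of_lt_one (norm_nonneg t) htn)
        (fun n => by positivity) (fun m => by positivity))))
    obtain ⟨n, m⟩ := p
    simp only [Function.uncurry_apply_pair]
    rw [norm_mul, norm_mul, norm_mul, norm_pow, norm_pow]
    have hB : ‖qpi q (q ^ (n + 1)) / qpi q (α * q ^ n)‖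
        ≤ Real.exp (QAux.M r) / Real.exp (-(QAux.M r)) := by
      rw [norm_div]
      exact div_le_div₀ hE0.le (QAux.norm_qpi_le hqr hr (hq1r n)) hE'0
        (QAux.norm_qpi_ge hqr hr (hαq n))
    have hC := QAux.norm_c_le hqr hr hαr m
    have hD : ‖t * q ^ n‖ ^ m ≤ ‖t‖ ^ m := by
      refine pow_le_pow_left₀ (norm_nonneg _) ?_ m
      rw [norm_mul, norm_pow]
      calc ‖t‖ * ‖q‖ ^ n ≤ ‖t‖ * 1 :=
            mul_le_mul_of_nonneg_left (pow_le_one₀ (norm_nonneg q) hqn.le) (norm_nonneg t)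
        _ = ‖t‖ := mul_one _
    calc ‖q‖ ^ n * ‖qpi q (q ^ (n + 1)) / qpi q (α * q ^ n)‖
          * (‖qp q α m / qp q q m‖ * ‖t * q ^ n‖ ^ m)
        ≤ ‖q‖ ^ n * (Real.exp (QAux.M r) / Real.exp (-(QAux.M r)))
            * (Real.exp (QAux.M r) / Real.exp (-(QAux.M r)) * ‖t‖ ^ m) :=
          mul_le_mul (mul_le_mul_of_nonneg_left hB (by positivity))
            (mul_le_mul hC hD (by positivity) (by positivity))
            (by positivity) (by positivity)
      _ = Real.exp (QAux.M r) / Real.exp (-(QAux.M r))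
            * (Real.exp (QAux.M r) / Real.exp (-(QAux.M r)))
            * (‖q‖ ^ n * ‖t‖ ^ m) := by ring
  refine ⟨claim1, claim2, ?_⟩
  calc ∑' n : ℕ, q ^ n * (qpi q (q ^ (n + 1)) * qpi q (α * t * q ^ n)) /
        (qpi q (α * q ^ n) * qpi q (t * q ^ n))
      = ∑' n : ℕ, ∑' m : ℕ, q ^ n * (qpi q (q ^ (n + 1)) / qpi q (α * q ^ n))
          * (qp q α m / qp q q m * (t * q ^ n) ^ m) :=
        tsum_congr fun n => ((hrows n).tsum_eq).symm
    _ = ∑' m : ℕ, ∑' n : ℕ, q ^ n * (qpi q (q ^ (n + 1)) / qpi q (α * q ^ n))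
          * (qp q α m / qp q q m * (t * q ^ n) ^ m) :=
        (Summable.tsum_comm' hF (fun n => (hrows n).summable) (fun m => (hcols m).summable)).symm
    _ = ∑' m : ℕ, t ^ m / (1 - α * q ^ m) := tsum_congr fun m => (hcols m).tsum_eq
end

section
/- Let q, β, t be complex numbers with |q| < 1, |β| < 1, and |t| < 1, and let θ be a real number. Then Σ_{n=0}^{∞} (1 − β q^n) C_n(cos θ; β|q) t^n = [(β t q e^{iθ};q)_∞ (β t q e^{−iθ};q)_∞ / ((t e^{iθ};q)_∞ (t e^{−iθ};q)_∞)] · (1 − β)(1 − β t²), the series converging absolutely. -/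
-- elementary real inequality: for 0 ≤ x ≤ b < 1, exp(-(x/(1-b))) ≤ 1 - x
lemma exp_neg_le_one_sub {x b : ℝ} (hx : 0 ≤ x) (hxb : x ≤ b) (hb : b < 1) :
    Real.exp (-(x / (1 - b))) ≤ 1 - x := by
  have hb1 : 0 < 1 - b := by linarith
  have hy : 0 ≤ x / (1 - b) := div_nonneg hx hb1.le
  have h1 : x / (1 - b) + 1 ≤ Real.exp (x / (1 - b)) := Real.add_one_le_exp _
  have h2 : (0:ℝ) < x / (1 - b) + 1 := by linarith
  rw [Real.exp_neg]
  rw [inv_le_comm₀ (Real.exp_pos _) (by nlinarith : (0:ℝ) < 1 - x)]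
  calc (1 - x)⁻¹ ≤ x / (1-b) + 1 := by
        rw [inv_le_iff_one_le_mul₀ (by nlinarith : (0:ℝ) < 1 - x)]
        have : x * (b - x) ≥ 0 := mul_nonneg hx (by linarith)
        rw [div_add' _ _ _ hb1.ne', div_mul_eq_mul_div, le_div_iff₀ hb1]
        nlinarith
    _ ≤ Real.exp (x / (1-b)) := h1

lemma geom_partial_le {r : ℝ} (hr0 : 0 ≤ r) (hr : r < 1) (n : ℕ) :
    ∑ k ∈ Finset.range n, r ^ k ≤ (1 - r)⁻¹ := by
  calc ∑ k ∈ Finset.range n, r ^ k ≤ ∑' k : ℕ, r ^ k :=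
        Summable.sum_le_tsum _ (fun k _ => by positivity) (summable_geometric_of_lt_one hr0 hr)
    _ = (1 - r)⁻¹ := tsum_geometric_of_lt_one hr0 hr

lemma norm_qp_le {q a : ℂ} (hq : ‖q‖ < 1) (n : ℕ) :
    ‖qp q a n‖ ≤ Real.exp (‖a‖ / (1 - ‖q‖)) := by
  have hq0 : (0:ℝ) ≤ ‖q‖ := norm_nonneg _
  calc ‖qp q a n‖ = ∏ k ∈ Finset.range n, ‖1 - a * q ^ k‖ := by
        rw [qp]; exact norm_prod _ _
    _ ≤ ∏ k ∈ Finset.range n, Real.exp (‖a‖ * ‖q‖ ^ k) := by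
        apply Finset.prod_le_prod (fun k _ => norm_nonneg _)
        intro k _
        calc ‖1 - a * q ^ k‖ ≤ ‖(1:ℂ)‖ + ‖a * q ^ k‖ := norm_sub_le _ _
          _ = 1 + ‖a‖ * ‖q‖ ^ k := by rw [norm_one, norm_mul, norm_pow]
          _ ≤ Real.exp (‖a‖ * ‖q‖ ^ k) := by
              have := Real.add_one_le_exp (‖a‖ * ‖q‖ ^ k); linarith
    _ = Real.exp (∑ k ∈ Finset.range n, ‖a‖ * ‖q‖ ^ k) := (Real.exp_sum _ _).symm
    _ ≤ Real.exp (‖a‖ / (1 - ‖q‖)) := by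
        apply Real.exp_le_exp.2
        rw [← Finset.mul_sum, div_eq_mul_inv]
        exact mul_le_mul_of_nonneg_left (geom_partial_le hq0 hq n) (norm_nonneg _)

lemma norm_qp_ge {q a : ℂ} (hq : ‖q‖ < 1) (ha : ‖a‖ < 1) (n : ℕ) :
    Real.exp (-(‖a‖ / ((1 - ‖a‖) * (1 - ‖q‖)))) ≤ ‖qp q a n‖ := by
  have hq0 : (0:ℝ) ≤ ‖q‖ := norm_nonneg _
  have ha0 : (0:ℝ) ≤ ‖a‖ := norm_nonneg _
  calc Real.exp (-(‖a‖ / ((1 - ‖a‖) * (1 - ‖q‖))))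
      ≤ Real.exp (-(∑ k ∈ Finset.range n, ‖a‖ * ‖q‖ ^ k / (1 - ‖a‖))) := by
        apply Real.exp_le_exp.2
        rw [neg_le_neg_iff]
        have : ∑ k ∈ Finset.range n, ‖a‖ * ‖q‖ ^ k / (1 - ‖a‖)
            = (‖a‖ / (1 - ‖a‖)) * ∑ k ∈ Finset.range n, ‖q‖ ^ k := by
          rw [Finset.mul_sum]; congr 1; ext k; ring
        rw [this, div_mul_eq_mul_div]
        have hS := geom_partial_le hq0 hq n
        have hS2 : (∑ k ∈ Finset.range n, ‖q‖ ^ k) * (1 - ‖q‖) ≤ 1 := by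
          have h1q : (0:ℝ) < 1 - ‖q‖ := by linarith
          calc (∑ k ∈ Finset.range n, ‖q‖ ^ k) * (1 - ‖q‖) ≤ (1 - ‖q‖)⁻¹ * (1 - ‖q‖) :=
                mul_le_mul_of_nonneg_right hS h1q.le
            _ = 1 := inv_mul_cancel₀ h1q.ne'
        rw [div_le_div_iff₀ (by linarith) (by nlinarith)]
        have h3 : ‖a‖ * (1 - ‖a‖) * ((∑ k ∈ Finset.range n, ‖q‖ ^ k) * (1 - ‖q‖))
            ≤ ‖a‖ * (1 - ‖a‖) * 1 :=
          mul_le_mul_of_nonneg_left hS2 (by nlinarith)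
        nlinarith [h3]
    _ = ∏ k ∈ Finset.range n, Real.exp (-(‖a‖ * ‖q‖ ^ k / (1 - ‖a‖))) := by
        rw [← Real.exp_sum, ← Finset.sum_neg_distrib]
    _ ≤ ∏ k ∈ Finset.range n, ‖1 - a * q ^ k‖ := by
        apply Finset.prod_le_prod (fun k _ => (Real.exp_pos _).le)
        intro k _
        have hk : ‖a‖ * ‖q‖ ^ k ≤ ‖a‖ := by
          nlinarith [pow_le_one₀ hq0 hq.le (n := k), ha0]
        calc Real.exp (-(‖a‖ * ‖q‖ ^ k / (1 - ‖a‖)))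
            ≤ 1 - ‖a‖ * ‖q‖ ^ k :=
              exp_neg_le_one_sub (by positivity) hk ha
          _ ≤ ‖1 - a * q ^ k‖ := by
              have h := norm_sub_norm_le (1:ℂ) (a * q ^ k)
              rw [norm_one, norm_mul, norm_pow] at h
              linarith
    _ = ‖qp q a n‖ := by rw [qp, norm_prod]

lemma factor_ne {q a : ℂ} (hq : ‖q‖ < 1) (ha : ‖a‖ < 1) (k : ℕ) : 1 - a * q ^ k ≠ 0 := by
  intro h
  have h2 : ‖a * q ^ k‖ < 1 := by
    rw [norm_mul, norm_pow]
    nlinarith [pow_le_one₀ (norm_nonneg q) hq.le (n := k), norm_nonneg a,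
      pow_nonneg (norm_nonneg q) k]
  have : (1:ℂ) = a * q ^ k := by linear_combination h
  rw [← this] at h2; simp at h2

lemma mult_qp {q a : ℂ} (hq : ‖q‖ < 1) (ha : ‖a‖ < 1) :
    Multipliable (fun k : ℕ => 1 - a * q ^ k) := by
  have hsum : Summable (fun k : ℕ => Complex.log (1 - a * q ^ k)) := by
    apply Summable.of_norm_bounded_eventually_nat (g := fun k => 3/2 * (‖a‖ * ‖q‖ ^ k))
    · exact (((summable_geometric_of_lt_one (norm_nonneg q) hq).mul_left ‖a‖).mul_left _)
    · have hev : ∀ᶠ k in Filter.atTop, ‖a * q ^ k‖ ≤ 1/2 := by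
        have : Filter.Tendsto (fun k : ℕ => ‖a‖ * ‖q‖ ^ k) Filter.atTop (nhds 0) := by
          simpa using (tendsto_pow_atTop_nhds_zero_of_lt_one (norm_nonneg q) hq).const_mul ‖a‖
        have := this.eventually_le_const (by norm_num : (0:ℝ) < 1/2)
        filter_upwards [this] with k hk
        rw [norm_mul, norm_pow]; linarith
      filter_upwards [hev] with k hk
      have := Complex.norm_log_one_add_half_le_self (z := -(a * q ^ k)) (by simpa using hk)
      calc ‖Complex.log (1 - a * q ^ k)‖ = ‖Complex.log (1 + -(a * q ^ k))‖ := by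
            rw [sub_eq_add_neg]
        _ ≤ 3/2 * ‖-(a * q ^ k)‖ := this
        _ = 3/2 * (‖a‖ * ‖q‖ ^ k) := by rw [norm_neg, norm_mul, norm_pow]
  have := Complex.multipliable_of_summable_log hsum
  exact this

lemma tendsto_qp {q a : ℂ} (hq : ‖q‖ < 1) (ha : ‖a‖ < 1) :
    Filter.Tendsto (fun n => qp q a n) Filter.atTop (nhds (qpi q a)) :=
  (mult_qp hq ha).hasProd.tendsto_prod_nat

lemma norm_qpi_ge {q a : ℂ} (hq : ‖q‖ < 1) (ha : ‖a‖ < 1) :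
    Real.exp (-(‖a‖ / ((1 - ‖a‖) * (1 - ‖q‖)))) ≤ ‖qpi q a‖ :=
  ge_of_tendsto' ((tendsto_qp hq ha).norm) (fun n => norm_qp_ge hq ha n)

lemma qpi_ne {q a : ℂ} (hq : ‖q‖ < 1) (ha : ‖a‖ < 1) : qpi q a ≠ 0 := by
  intro h
  have := norm_qpi_ge hq ha
  rw [h, norm_zero] at this
  exact absurd this (not_le.2 (Real.exp_pos _))

lemma qpi_shift {q a : ℂ} (hq : ‖q‖ < 1) (ha : ‖a‖ < 1) :
    qpi q a = (1 - a) * qpi q (a * q) := by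
  have haq : ‖a * q‖ < 1 := by
    rw [norm_mul]
    nlinarith [norm_nonneg a, norm_nonneg q]
  have h1 : Filter.Tendsto (fun n => qp q a (n + 1)) Filter.atTop (nhds (qpi q a)) :=
    (tendsto_qp hq ha).comp (Filter.tendsto_add_atTop_nat 1)
  have h2 : ∀ n, qp q a (n + 1) = (1 - a) * qp q (a * q) n := by
    intro n
    rw [qp, qp, Finset.prod_range_succ']
    simp only [pow_zero, mul_one]
    rw [mul_comm]
    congr 1
    apply Finset.prod_congr rfl
    intro k _
    ring_nf
  have h3 : Filter.Tendsto (fun n => (1 - a) * qp q (a * q) n) Filter.atTop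
      (nhds ((1 - a) * qpi q (a * q))) := (tendsto_qp hq haq).const_mul _
  rw [funext h2] at h1
  exact tendsto_nhds_unique h1 h3

lemma qp_ne {q a : ℂ} (hq : ‖q‖ < 1) (ha : ‖a‖ < 1) (n : ℕ) : qp q a n ≠ 0 := by
  intro h
  have := norm_qp_ge hq ha n
  rw [h, norm_zero] at this
  exact absurd this (not_le.2 (Real.exp_pos _))

/-- coefficients of the q-binomial series -/
noncomputable def qc (q β : ℂ) (k : ℕ) : ℂ := qp q β k / qp q q k

noncomputable def Mq (q β : ℂ) : ℝ :=
  Real.exp (‖β‖ / (1 - ‖q‖)) * Real.exp (‖q‖ / ((1 - ‖q‖) * (1 - ‖q‖)))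

lemma Mq_pos (q β : ℂ) : 0 < Mq q β := by rw [Mq]; positivity

lemma norm_qc_le {q β : ℂ} (hq : ‖q‖ < 1) (k : ℕ) : ‖qc q β k‖ ≤ Mq q β := by
  rw [qc, norm_div, Mq]
  have h1 := norm_qp_le (a := β) hq k
  have h2 := norm_qp_ge (a := q) hq hq k
  have h3 : (0:ℝ) < Real.exp (-(‖q‖ / ((1 - ‖q‖) * (1 - ‖q‖)))) := Real.exp_pos _
  calc ‖qp q β k‖ / ‖qp q q k‖
      ≤ Real.exp (‖β‖ / (1 - ‖q‖)) / Real.exp (-(‖q‖ / ((1 - ‖q‖) * (1 - ‖q‖)))) := by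
        exact div_le_div₀ (Real.exp_pos _).le h1 h3 h2
    _ = Real.exp (‖β‖ / (1 - ‖q‖)) * Real.exp (‖q‖ / ((1 - ‖q‖) * (1 - ‖q‖))) := by
        rw [Real.exp_neg, div_eq_mul_inv, inv_inv]

lemma summable_qc_norm {q β x : ℂ} (hq : ‖q‖ < 1) (hx : ‖x‖ < 1) :
    Summable (fun k : ℕ => ‖qc q β k * x ^ k‖) := by
  refine Summable.of_nonneg_of_le (fun k => norm_nonneg _) (fun k => ?_)
    ((summable_geometric_of_lt_one (norm_nonneg x) hx).mul_left (Mq q β))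
  rw [norm_mul, norm_pow]
  exact mul_le_mul_of_nonneg_right (norm_qc_le hq k) (by positivity)

lemma summable_qc {q β x : ℂ} (hq : ‖q‖ < 1) (hx : ‖x‖ < 1) :
    Summable (fun k : ℕ => qc q β k * x ^ k) := (summable_qc_norm hq hx).of_norm

lemma qc_rec {q β : ℂ} (hq : ‖q‖ < 1) (hβ : ‖β‖ < 1) (k : ℕ) :
    qc q β (k + 1) * (1 - q ^ (k + 1)) = qc q β k * (1 - β * q ^ k) := by
  have h1 : qp q β (k + 1) = qp q β k * (1 - β * q ^ k) := Finset.prod_range_succ _ _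
  have h2 : qp q q (k + 1) = qp q q k * (1 - q ^ (k + 1)) := by
    rw [qp, Finset.prod_range_succ, ← qp, pow_succ']
  have h3 := qp_ne hq hq k
  have h5 : (1 : ℂ) - q ^ (k + 1) ≠ 0 := by
    have := factor_ne hq hq k
    rwa [← pow_succ'] at this
  rw [qc, qc, h1, h2]
  field_simp

/-- the q-binomial series -/
noncomputable def qS (q β x : ℂ) : ℂ := ∑' k : ℕ, qc q β k * x ^ k

lemma qS_funeq {q β x : ℂ} (hq : ‖q‖ < 1) (hβ : ‖β‖ < 1) (hx : ‖x‖ < 1) :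
    qS q β x * (1 - x) = qS q β (q * x) * (1 - β * x) := by
  have hqx : ‖q * x‖ < 1 := by
    rw [norm_mul]
    nlinarith [norm_nonneg q, norm_nonneg x]
  set G : ℕ → ℂ := fun k => qc q β k * (1 - q ^ k) * x ^ k with hG
  have hGsum : Summable G := by
    apply Summable.of_norm
    refine Summable.of_nonneg_of_le (fun k => norm_nonneg _) (fun k => ?_)
      (((summable_geometric_of_lt_one (norm_nonneg x) hx).mul_left (Mq q β * 2)))
    rw [hG]
    simp only [norm_mul, norm_pow]
    have h1 : ‖(1:ℂ) - q ^ k‖ ≤ 2 := by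
      calc ‖(1:ℂ) - q ^ k‖ ≤ ‖(1:ℂ)‖ + ‖q ^ k‖ := norm_sub_le _ _
        _ ≤ 1 + 1 := by
            rw [norm_one, norm_pow]
            have := pow_le_one₀ (norm_nonneg q) hq.le (n := k)
            linarith
        _ = 2 := by norm_num
    calc ‖qc q β k‖ * ‖(1:ℂ) - q ^ k‖ * ‖x‖ ^ k
        ≤ Mq q β * 2 * ‖x‖ ^ k := by
          apply mul_le_mul_of_nonneg_right _ (by positivity)
          exact mul_le_mul (norm_qc_le hq k) h1 (norm_nonneg _) (Mq_pos q β).le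
      _ = Mq q β * 2 * ‖x‖ ^ k := rfl
  have hGshift : Summable (fun k => G (k + 1)) := by
    rw [← summable_nat_add_iff 1] at hGsum
    exact hGsum
  have hu : Summable (fun k : ℕ => qc q β k * x ^ k) := summable_qc hq hx
  have hv : Summable (fun k : ℕ => qc q β k * (q * x) ^ k) := summable_qc hq hqx
  have key : ∀ k : ℕ, qc q β k * x ^ k * (1 - x) - qc q β k * (q * x) ^ k * (1 - β * x)
      = G k - G (k + 1) := by
    intro k
    have hr := qc_rec hq hβ k
    rw [hG]
    simp only
    rw [mul_pow]
    linear_combination x ^ (k + 1) * hr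
  have e1 : qS q β x * (1 - x) = ∑' k : ℕ, qc q β k * x ^ k * (1 - x) := by
    rw [qS, tsum_mul_right]
  have e2 : qS q β (q * x) * (1 - β * x) = ∑' k : ℕ, qc q β k * (q * x) ^ k * (1 - β * x) := by
    rw [qS, tsum_mul_right]
  have e3 : (∑' k : ℕ, qc q β k * x ^ k * (1 - x))
      - (∑' k : ℕ, qc q β k * (q * x) ^ k * (1 - β * x))
      = ∑' k : ℕ, (G k - G (k + 1)) := by
    rw [← Summable.tsum_sub (hu.mul_right _) (hv.mul_right _)]
    exact tsum_congr key
  have e4 : (∑' k : ℕ, (G k - G (k + 1))) = 0 := by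
    rw [Summable.tsum_sub hGsum hGshift]
    have := Summable.tsum_eq_zero_add hGsum
    have hG0 : G 0 = 0 := by rw [hG]; simp
    rw [this, hG0]
    ring
  have := e3.trans e4
  rw [← e1, ← e2] at this
  linear_combination this

lemma qS_iter {q β x : ℂ} (hq : ‖q‖ < 1) (hβ : ‖β‖ < 1) (hx : ‖x‖ < 1) (N : ℕ) :
    qS q β x * qp q x N = qp q (β * x) N * qS q β (q ^ N * x) := by
  induction N with
  | zero => simp [qp]
  | succ N ih =>
    have hy : ‖q ^ N * x‖ < 1 := by
      rw [norm_mul, norm_pow]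
      calc ‖q‖ ^ N * ‖x‖ ≤ 1 * ‖x‖ := by
            apply mul_le_mul_of_nonneg_right (pow_le_one₀ (norm_nonneg q) hq.le) (norm_nonneg x)
        _ < 1 := by rwa [one_mul]
    have hfe := qS_funeq hq hβ hy
    have h1 : qp q x (N + 1) = qp q x N * (1 - x * q ^ N) := Finset.prod_range_succ _ _
    have h2 : qp q (β * x) (N + 1) = qp q (β * x) N * (1 - β * x * q ^ N) :=
      Finset.prod_range_succ _ _
    rw [h1, h2]
    have hq1 : q * (q ^ N * x) = q ^ (N + 1) * x := by ring
    rw [hq1] at hfe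
    calc qS q β x * (qp q x N * (1 - x * q ^ N))
        = (qS q β x * qp q x N) * (1 - x * q ^ N) := by ring
      _ = (qp q (β * x) N * qS q β (q ^ N * x)) * (1 - x * q ^ N) := by rw [ih]
      _ = qp q (β * x) N * (qS q β (q ^ N * x) * (1 - q ^ N * x)) := by ring_nf
      _ = qp q (β * x) N * (qS q β (q ^ (N + 1) * x) * (1 - β * (q ^ N * x))) := by rw [hfe]
      _ = qp q (β * x) N * (1 - β * x * q ^ N) * qS q β (q ^ (N + 1) * x) := by ring

lemma qS_sub_one {q β x y : ℂ} (hq : ‖q‖ < 1) (hx : ‖x‖ < 1) (hyx : ‖y‖ ≤ ‖x‖) :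
    ‖qS q β y - 1‖ ≤ Mq q β * (1 - ‖x‖)⁻¹ * ‖y‖ := by
  have hy : ‖y‖ < 1 := lt_of_le_of_lt hyx hx
  have hsum : Summable (fun k : ℕ => qc q β k * y ^ k) := summable_qc hq hy
  have h0 : qS q β y = 1 + ∑' k : ℕ, qc q β (k + 1) * y ^ (k + 1) := by
    rw [qS, Summable.tsum_eq_zero_add hsum]
    congr 1
    rw [qc, qp, qp]
    simp
  rw [h0]
  have hshift : Summable (fun k : ℕ => qc q β (k + 1) * y ^ (k + 1)) := by
    rw [← summable_nat_add_iff 1] at hsum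
    exact hsum
  calc ‖1 + (∑' k : ℕ, qc q β (k + 1) * y ^ (k + 1)) - 1‖
      = ‖∑' k : ℕ, qc q β (k + 1) * y ^ (k + 1)‖ := by
        congr 1; ring
    _ ≤ ∑' k : ℕ, ‖qc q β (k + 1) * y ^ (k + 1)‖ := norm_tsum_le_tsum_norm hshift.norm
    _ ≤ ∑' k : ℕ, Mq q β * ‖x‖ ^ k * ‖y‖ := by
        apply Summable.tsum_le_tsum _ hshift.norm
          (((summable_geometric_of_lt_one (norm_nonneg x) hx).mul_left (Mq q β)).mul_right ‖y‖)
        intro k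
        rw [norm_mul, norm_pow, pow_succ]
        calc ‖qc q β (k + 1)‖ * (‖y‖ ^ k * ‖y‖)
            ≤ Mq q β * (‖x‖ ^ k * ‖y‖) := by
              apply mul_le_mul (norm_qc_le hq _) _ (by positivity) (Mq_pos q β).le
              exact mul_le_mul_of_nonneg_right (pow_le_pow_left₀ (norm_nonneg y) hyx k)
                (norm_nonneg y)
          _ = Mq q β * ‖x‖ ^ k * ‖y‖ := by ring
    _ = Mq q β * (1 - ‖x‖)⁻¹ * ‖y‖ := by
        rw [tsum_mul_right, tsum_mul_left, tsum_geometric_of_lt_one (norm_nonneg x) hx]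

lemma qbinom {q β x : ℂ} (hq : ‖q‖ < 1) (hβ : ‖β‖ < 1) (hx : ‖x‖ < 1) :
    qS q β x * qpi q x = qpi q (β * x) := by
  have hβx : ‖β * x‖ < 1 := by
    rw [norm_mul]
    nlinarith [norm_nonneg β, norm_nonneg x]
  -- limit of LHS sequence
  have hL : Filter.Tendsto (fun N => qS q β x * qp q x N) Filter.atTop
      (nhds (qS q β x * qpi q x)) := (tendsto_qp hq hx).const_mul _
  -- S (q^N x) → 1
  have hS1 : Filter.Tendsto (fun N => qS q β (q ^ N * x)) Filter.atTop (nhds 1) := by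
    have hb : Filter.Tendsto (fun N : ℕ => Mq q β * (1 - ‖x‖)⁻¹ * (‖q‖ ^ N * ‖x‖))
        Filter.atTop (nhds 0) := by
      have h := (tendsto_pow_atTop_nhds_zero_of_lt_one (norm_nonneg q) hq).mul_const ‖x‖
      rw [zero_mul] at h
      simpa using h.const_mul (Mq q β * (1 - ‖x‖)⁻¹)
    have hsq : Filter.Tendsto (fun N => qS q β (q ^ N * x) - 1) Filter.atTop (nhds 0) := by
      apply squeeze_zero_norm _ hb
      intro N
      have hyx : ‖q ^ N * x‖ ≤ ‖x‖ := by
        rw [norm_mul, norm_pow]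
        calc ‖q‖ ^ N * ‖x‖ ≤ 1 * ‖x‖ :=
              mul_le_mul_of_nonneg_right (pow_le_one₀ (norm_nonneg q) hq.le) (norm_nonneg x)
          _ = ‖x‖ := one_mul _
      have := qS_sub_one (β := β) hq hx hyx
      rwa [norm_mul, norm_pow] at this
    have := hsq.add_const 1
    simpa using this
  have hR : Filter.Tendsto (fun N => qp q (β * x) N * qS q β (q ^ N * x)) Filter.atTop
      (nhds (qpi q (β * x) * 1)) := (tendsto_qp hq hβx).mul hS1
  rw [mul_one] at hR
  have heq : (fun N => qS q β x * qp q x N) = fun N => qp q (β * x) N * qS q β (q ^ N * x) :=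
    funext (fun N => qS_iter hq hβ hx N)
  rw [heq] at hL
  exact tendsto_nhds_unique hL hR

lemma qbinom' {q β x : ℂ} (hq : ‖q‖ < 1) (hβ : ‖β‖ < 1) (hx : ‖x‖ < 1) :
    (∑' k : ℕ, qc q β k * x ^ k) = qpi q (β * x) / qpi q x := by
  rw [eq_div_iff (qpi_ne hq hx), ← qS]
  exact qbinom hq hβ hx

lemma cab_term {q β t : ℂ} (θ : ℝ) (n : ℕ) :
    (∑ k ∈ Finset.range (n + 1),
      (qc q β k * (t * Complex.exp (-(Complex.I * (θ:ℂ)))) ^ k) *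
      (qc q β (n - k) * (t * Complex.exp (Complex.I * (θ:ℂ))) ^ (n - k)))
    = Cab q β β n θ * t ^ n := by
  rw [Cab, Finset.sum_mul]
  apply Finset.sum_congr rfl
  intro k hk
  have hkn : k ≤ n := Nat.lt_succ_iff.mp (Finset.mem_range.mp hk)
  rw [qc, qc]
  rw [mul_pow, mul_pow, ← Complex.exp_nat_mul, ← Complex.exp_nat_mul]
  have hcast : ((n - k : ℕ) : ℂ) = (n : ℂ) - (k : ℂ) := by
    push_cast [hkn]; ring
  have htpow : t ^ n = t ^ k * t ^ (n - k) := by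
    rw [← pow_add]
    congr 1
    omega
  have he : Complex.exp (Complex.I * ((n : ℂ) - 2 * (k : ℂ)) * (θ:ℂ))
      = Complex.exp ((k:ℂ) * -(Complex.I * (θ:ℂ))) *
        Complex.exp (((n - k : ℕ):ℂ) * (Complex.I * (θ:ℂ))) := by
    rw [← Complex.exp_add]
    congr 1
    rw [hcast]
    ring
  rw [he, htpow]
  ring

lemma norm_texp {t : ℂ} (z : ℂ) (hz : z.re = 0) : ‖t * Complex.exp z‖ = ‖t‖ := by
  rw [norm_mul, Complex.norm_exp, hz, Real.exp_zero, mul_one]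

lemma gen_sum {q β t : ℂ} (hq : ‖q‖ < 1) (hβ : ‖β‖ < 1) (ht : ‖t‖ < 1) (θ : ℝ) :
    Summable (fun n : ℕ => ‖Cab q β β n θ * t ^ n‖) ∧
    ∑' n : ℕ, Cab q β β n θ * t ^ n =
      qpi q (β * (t * Complex.exp (Complex.I * (θ:ℂ)))) *
        qpi q (β * (t * Complex.exp (-(Complex.I * (θ:ℂ))))) /
      (qpi q (t * Complex.exp (Complex.I * (θ:ℂ))) *
        qpi q (t * Complex.exp (-(Complex.I * (θ:ℂ))))) := by
  set u := t * Complex.exp (-(Complex.I * (θ:ℂ))) with hu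
  set v := t * Complex.exp (Complex.I * (θ:ℂ)) with hv
  have hure : (-(Complex.I * (θ:ℂ))).re = 0 := by simp
  have hvre : (Complex.I * (θ:ℂ)).re = 0 := by simp
  have hnu : ‖u‖ < 1 := by rw [hu, norm_texp _ hure]; exact ht
  have hnv : ‖v‖ < 1 := by rw [hv, norm_texp _ hvre]; exact ht
  have hf := summable_qc_norm (β := β) hq hnu
  have hg := summable_qc_norm (β := β) hq hnv
  have hcab : ∀ n : ℕ, (∑ k ∈ Finset.range (n + 1),
      (qc q β k * u ^ k) * (qc q β (n - k) * v ^ (n - k))) = Cab q β β n θ * t ^ n :=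
    fun n => cab_term θ n
  constructor
  · have := summable_norm_sum_mul_range_of_summable_norm hf hg
    simpa only [hcab] using this
  · have hmul := tsum_mul_tsum_eq_tsum_sum_range_of_summable_norm hf hg
    simp only [hcab] at hmul
    rw [← hmul, qbinom' hq hβ hnu, qbinom' hq hβ hnv, div_mul_div_comm]
    ring

/-- Modified generating function for the continuous q-ultraspherical polynomials. -/
theorem stmt12 (q β t : ℂ) (hq : ‖q‖ < 1) (hβ : ‖β‖ < 1)
    (ht : ‖t‖ < 1) (θ : ℝ) :
    Summable (fun n : ℕ => ‖(1 - β * q ^ n) * Cab q β β n θ * t ^ n‖) ∧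
    ∑' n : ℕ, (1 - β * q ^ n) * Cab q β β n θ * t ^ n =
      qpi q (β * t * q * Complex.exp (Complex.I * (θ : ℂ))) *
          qpi q (β * t * q * Complex.exp (-(Complex.I * (θ : ℂ)))) /
        (qpi q (t * Complex.exp (Complex.I * (θ : ℂ))) *
          qpi q (t * Complex.exp (-(Complex.I * (θ : ℂ))))) *
        ((1 - β) * (1 - β * t ^ 2)) := by
  have hqt : ‖q * t‖ < 1 := by
    rw [norm_mul]
    nlinarith [norm_nonneg q, norm_nonneg t]
  obtain ⟨hAs, hAt⟩ := gen_sum hq hβ ht θ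
  obtain ⟨hBs, hBt⟩ := gen_sum hq hβ hqt θ
  have hsplit : ∀ n : ℕ, (1 - β * q ^ n) * Cab q β β n θ * t ^ n
      = Cab q β β n θ * t ^ n - β * (Cab q β β n θ * (q * t) ^ n) := by
    intro n
    rw [mul_pow]
    ring
  constructor
  · refine Summable.of_nonneg_of_le (fun n => norm_nonneg _) (fun n => ?_)
      (hAs.add (hBs.mul_left ‖β‖))
    rw [hsplit n]
    calc ‖Cab q β β n θ * t ^ n - β * (Cab q β β n θ * (q * t) ^ n)‖
        ≤ ‖Cab q β β n θ * t ^ n‖ + ‖β * (Cab q β β n θ * (q * t) ^ n)‖ := norm_sub_le _ _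
      _ = ‖Cab q β β n θ * t ^ n‖ + ‖β‖ * ‖Cab q β β n θ * (q * t) ^ n‖ := by rw [norm_mul β]
  · have e1 : ∑' n : ℕ, (1 - β * q ^ n) * Cab q β β n θ * t ^ n
        = (∑' n : ℕ, Cab q β β n θ * t ^ n) - β * ∑' n : ℕ, Cab q β β n θ * (q * t) ^ n := by
      rw [← tsum_mul_left, ← Summable.tsum_sub hAs.of_norm (hBs.of_norm.mul_left β)]
      exact tsum_congr hsplit
    rw [e1, hAt, hBt]
    set E := Complex.exp (Complex.I * (θ:ℂ)) with hE
    set E' := Complex.exp (-(Complex.I * (θ:ℂ))) with hE'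
    have hnU : ‖t * E‖ < 1 := by rw [hE, norm_texp _ (by simp)]; exact ht
    have hnV : ‖t * E'‖ < 1 := by rw [hE', norm_texp _ (by simp)]; exact ht
    have hnUq : ‖t * E * q‖ < 1 := by
      rw [norm_mul]
      nlinarith [norm_nonneg (t * E), norm_nonneg q]
    have hnVq : ‖t * E' * q‖ < 1 := by
      rw [norm_mul]
      nlinarith [norm_nonneg (t * E'), norm_nonneg q]
    have hβU : ‖β * (t * E)‖ < 1 := by
      rw [norm_mul]
      nlinarith [norm_nonneg β, norm_nonneg (t * E)]
    have hβV : ‖β * (t * E')‖ < 1 := by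
      rw [norm_mul]
      nlinarith [norm_nonneg β, norm_nonneg (t * E')]
    rw [show β * (q * t * E) = β * (t * E) * q from by ring,
      show β * (q * t * E') = β * (t * E') * q from by ring,
      show q * t * E = t * E * q from by ring,
      show q * t * E' = t * E' * q from by ring,
      show β * t * q * E = β * (t * E) * q from by ring,
      show β * t * q * E' = β * (t * E') * q from by ring]
    rw [qpi_shift hq hβU, qpi_shift hq hβV, qpi_shift hq hnU, qpi_shift hq hnV]
    have hEE : E * E' = 1 := by rw [hE, hE', ← Complex.exp_add]; simp
    have ht2 : t * E * (t * E') = t ^ 2 := by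
      calc t * E * (t * E') = t ^ 2 * (E * E') := by ring
        _ = t ^ 2 := by rw [hEE]; ring
    rw [show (1:ℂ) - β * t ^ 2 = 1 - β * (t * E * (t * E')) from by rw [ht2]]
    have n1 : qpi q (t * E * q) ≠ 0 := qpi_ne hq hnUq
    have n2 : qpi q (t * E' * q) ≠ 0 := qpi_ne hq hnVq
    have nf1 : (1:ℂ) - t * E ≠ 0 := by simpa using factor_ne hq hnU 0
    have nf2 : (1:ℂ) - t * E' ≠ 0 := by simpa using factor_ne hq hnV 0
    field_simp
    ring
end

section
/- Let q, β, γ, t be complex numbers with |q| < 1, 0 < |β| < 1, |γ| < 1, |βt²| < 1, |γt²| < 1, and β q^k ≠ 1 for all k ≥ 1 (so all denominators below are nonzero), and let m be a nonnegative integer. Then Σ_{n=0}^{∞} [(qβ/γ;q)_n (γ t² q^n;q)_∞ / ((q;q)_n (β t² q^n;q)_∞)] (γ q^m)^n = [(β;q)_∞ / (γ;q)_∞] · Σ_{j=0}^{∞} [(γ/β;q)_j (γ;q)_{m+j} / ((q;q)_j (β;q)_{m+j+1})] β^j t^{2j}, both series converging absolutely (here γ ≠ 0 is required for (qβ/γ;q)_n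 and the left-hand series to make sense; when |γ q^m| < 1 both sides converge). -/
open Complex Finset Filter Topology

lemma qp_succ (q a : ℂ) (n : ℕ) : qp q a (n + 1) = qp q a n * (1 - a * q ^ n) :=
  Finset.prod_range_succ _ _

lemma qp_add (q a : ℂ) (n m : ℕ) : qp q a (n + m) = qp q a n * qp q (a * q ^ n) m := by
  unfold qp
  rw [Finset.prod_range_add]
  congr 1
  exact Finset.prod_congr rfl fun k _ => by rw [pow_add]; ring_nf

lemma one_sub_ne' {w : ℂ} (h : ‖w‖ < 1) : 1 - w ≠ 0 := by
  intro h0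
  rw [sub_eq_zero] at h0
  rw [← h0] at h
  simp at h

lemma qp_ne_zero {q a : ℂ} (ha : ∀ k, 1 - a * q ^ k ≠ 0) (n : ℕ) : qp q a n ≠ 0 :=
  Finset.prod_ne_zero_iff.mpr fun k _ => ha k

section basic
variable {q : ℂ} (hq : ‖q‖ < 1)
include hq

lemma log_summable (a : ℂ) : Summable fun k : ℕ => Complex.log (1 - a * q ^ k) := by
  apply Summable.of_norm_bounded_eventually_nat (g := fun k => 3 / 2 * (‖a‖ * ‖q‖ ^ k))
  · exact ((summable_geometric_of_lt_one (norm_nonneg q) hq).mul_left _).mul_left _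
  · have h0 : Tendsto (fun k : ℕ => ‖a‖ * ‖q‖ ^ k) atTop (𝓝 (‖a‖ * 0)) :=
      (tendsto_pow_atTop_nhds_zero_of_lt_one (norm_nonneg q) hq).const_mul _
    rw [mul_zero] at h0
    filter_upwards [h0.eventually_le_const (by norm_num : (0:ℝ) < 1/2)] with k hk
    have hn : ‖-(a * q ^ k)‖ ≤ 1 / 2 := by
      rw [norm_neg, norm_mul, norm_pow]; exact hk
    have := Complex.norm_log_one_add_half_le_self hn
    rw [show (1 : ℂ) + -(a * q ^ k) = 1 - a * q ^ k by ring] at this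
    refine this.trans ?_
    rw [norm_neg, norm_mul, norm_pow]


lemma qpi_hasProd {a : ℂ} (ha : ∀ k, 1 - a * q ^ k ≠ 0) :
    HasProd (fun k : ℕ => 1 - a * q ^ k)
      (Complex.exp (∑' k : ℕ, Complex.log (1 - a * q ^ k))) := by
  have h := (log_summable hq a).hasSum.cexp
  have hfun : (Complex.exp ∘ fun k : ℕ => Complex.log (1 - a * q ^ k)) =
      fun k : ℕ => 1 - a * q ^ k := funext fun k => Complex.exp_log (ha k)
  rwa [hfun] at h

lemma qpi_eq_exp {a : ℂ} (ha : ∀ k, 1 - a * q ^ k ≠ 0) :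
    qpi q a = Complex.exp (∑' k : ℕ, Complex.log (1 - a * q ^ k)) :=
  (qpi_hasProd hq ha).tprod_eq

lemma qpi_ne_zero {a : ℂ} (ha : ∀ k, 1 - a * q ^ k ≠ 0) : qpi q a ≠ 0 := by
  rw [qpi_eq_exp hq ha]; exact Complex.exp_ne_zero _

lemma qpi_multipliable {a : ℂ} (ha : ∀ k, 1 - a * q ^ k ≠ 0) :
    Multipliable (fun k : ℕ => 1 - a * q ^ k) :=
  ⟨_, qpi_hasProd hq ha⟩

lemma qp_tendsto {a : ℂ} (ha : ∀ k, 1 - a * q ^ k ≠ 0) :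
    Tendsto (fun n => qp q a n) atTop (𝓝 (qpi q a)) :=
  (qpi_multipliable hq ha).hasProd.tendsto_prod_nat

lemma qpi_split {a : ℂ} (ha : ∀ k, 1 - a * q ^ k ≠ 0) (n : ℕ) :
    qpi q a = qp q a n * qpi q (a * q ^ n) := by
  have ha' : ∀ k, 1 - a * q ^ n * q ^ k ≠ 0 := fun k => by
    have := ha (n + k); rwa [pow_add, ← mul_assoc] at this
  rw [qpi_eq_exp hq ha, qpi_eq_exp hq ha',
    ← Summable.sum_add_tsum_nat_add n (log_summable hq a), Complex.exp_add, Complex.exp_sum]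
  congr 1
  · exact Finset.prod_congr rfl fun k _ => Complex.exp_log (ha k)
  · congr 1
    apply tsum_congr
    intro k
    congr 1
    rw [pow_add]; ring
end basic

lemma qp_norm_le {q : ℂ} (hq : ‖q‖ < 1) (a : ℂ) (n : ℕ) :
    ‖qp q a n‖ ≤ Real.exp (‖a‖ * (1 - ‖q‖)⁻¹) := by
  have h1 : ‖qp q a n‖ ≤ ∏ k ∈ Finset.range n, ‖(1 : ℂ) - a * q ^ k‖ := norm_prod_le _ _
  refine h1.trans ?_
  have h2 : ∏ k ∈ Finset.range n, ‖(1 : ℂ) - a * q ^ k‖ ≤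
      ∏ k ∈ Finset.range n, Real.exp (‖a‖ * ‖q‖ ^ k) := by
    apply Finset.prod_le_prod (fun k _ => norm_nonneg _)
    intro k _
    have : ‖(1 : ℂ) - a * q ^ k‖ ≤ 1 + ‖a‖ * ‖q‖ ^ k := by
      calc ‖(1 : ℂ) - a * q ^ k‖ ≤ ‖(1 : ℂ)‖ + ‖a * q ^ k‖ := norm_sub_le _ _
        _ = 1 + ‖a‖ * ‖q‖ ^ k := by rw [norm_one, norm_mul, norm_pow]
    refine this.trans ?_
    have := Real.add_one_le_exp (‖a‖ * ‖q‖ ^ k)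
    linarith
  refine h2.trans ?_
  rw [← Real.exp_sum]
  apply Real.exp_le_exp.mpr
  rw [← Finset.mul_sum]
  apply mul_le_mul_of_nonneg_left _ (norm_nonneg a)
  calc ∑ k ∈ Finset.range n, ‖q‖ ^ k ≤ ∑' k : ℕ, ‖q‖ ^ k :=
        Summable.sum_le_tsum _ (fun k _ => pow_nonneg (norm_nonneg q) k)
          (summable_geometric_of_lt_one (norm_nonneg q) hq)
    _ = (1 - ‖q‖)⁻¹ := tsum_geometric_of_lt_one (norm_nonneg q) hq

lemma qp_norm_lower {q a : ℂ} (hq : ‖q‖ < 1) (ha : ∀ k, 1 - a * q ^ k ≠ 0) :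
    ∃ c : ℝ, 0 < c ∧ ∀ n, c ≤ ‖qp q a n‖ := by
  have h1 : Tendsto (fun n => ‖qp q a n‖) atTop (𝓝 ‖qpi q a‖) := (qp_tendsto hq ha).norm
  have hL : 0 < ‖qpi q a‖ := norm_pos_iff.mpr (qpi_ne_zero hq ha)
  have h2 : ∀ᶠ n in atTop, ‖qpi q a‖ / 2 < ‖qp q a n‖ :=
    h1.eventually (eventually_gt_nhds (by linarith))
  obtain ⟨N, hN⟩ := eventually_atTop.mp h2
  have hne : (Finset.range (N + 1)).Nonempty := Finset.nonempty_range_add_one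
  set c₀ := (Finset.range (N + 1)).inf' hne (fun n => ‖qp q a n‖) with hc₀
  have hc₀pos : 0 < c₀ := by
    rw [hc₀, Finset.lt_inf'_iff]
    exact fun i _ => norm_pos_iff.mpr (qp_ne_zero ha i)
  refine ⟨min (‖qpi q a‖ / 2) c₀, lt_min (by linarith) hc₀pos, fun n => ?_⟩
  rcases le_or_gt N n with h | h
  · exact (min_le_left _ _).trans (hN n h).le
  · exact (min_le_right _ _).trans
      (Finset.inf'_le _ (Finset.mem_range.mpr (by omega)))

set_option maxHeartbeats 1000000 in
lemma qbinom_s13 {q : ℂ} (hq : ‖q‖ < 1) (a : ℂ) {z : ℂ} (hz : ‖z‖ < 1)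
    (haz : ∀ k, 1 - a * z * q ^ k ≠ 0) :
    Summable (fun n : ℕ => ‖qp q a n / qp q q n * z ^ n‖) ∧
      ∑' n : ℕ, qp q a n / qp q q n * z ^ n = qpi q (a * z) / qpi q z := by
  have hqq : ∀ k, 1 - q * q ^ k ≠ 0 := fun k => one_sub_ne' (by
    rw [norm_mul, norm_pow]
    calc ‖q‖ * ‖q‖ ^ k ≤ ‖q‖ * 1 :=
      mul_le_mul_of_nonneg_left (pow_le_one₀ (norm_nonneg q) hq.le) (norm_nonneg q)
    _ < 1 := by rwa [mul_one])
  have hz' : ∀ k, 1 - z * q ^ k ≠ 0 := fun k => one_sub_ne' (by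
    rw [norm_mul, norm_pow]
    calc ‖z‖ * ‖q‖ ^ k ≤ ‖z‖ * 1 :=
      mul_le_mul_of_nonneg_left (pow_le_one₀ (norm_nonneg q) hq.le) (norm_nonneg z)
    _ < 1 := by rwa [mul_one])
  obtain ⟨B, hB0, hB⟩ := qp_norm_lower hq hqq
  set A := Real.exp (‖a‖ * (1 - ‖q‖)⁻¹) with hA
  have hA0 : 0 < A := Real.exp_pos _
  have hAB : 0 ≤ A / B := le_of_lt (div_pos hA0 hB0)
  have hqpq : ∀ n, qp q q n ≠ 0 := qp_ne_zero hqq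
  have hcb : ∀ n, ‖qp q a n / qp q q n‖ ≤ A / B := fun n => by
    rw [norm_div]
    exact div_le_div₀ hA0.le (qp_norm_le hq a n) hB0 (hB n)
  -- summability for any |w| < 1
  have hsum : ∀ w : ℂ, ‖w‖ < 1 → Summable fun n : ℕ => ‖qp q a n / qp q q n * w ^ n‖ := by
    intro w hw
    apply Summable.of_nonneg_of_le (fun n => norm_nonneg _)
      (f := fun n => A / B * ‖w‖ ^ n)
    · intro n
      rw [norm_mul, norm_pow]
      exact mul_le_mul_of_nonneg_right (hcb n) (pow_nonneg (norm_nonneg w) n)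
    · exact (summable_geometric_of_lt_one (norm_nonneg w) hw).mul_left _
  set S : ℂ → ℂ := fun w => ∑' n : ℕ, qp q a n / qp q q n * w ^ n with hS
  set c : ℕ → ℂ := fun n => qp q a n / qp q q n with hc
  have key : ∀ n : ℕ, c (n + 1) * (1 - q ^ (n + 1)) = c n * (1 - a * q ^ n) := by
    intro n
    have h2 : 1 - q * q ^ n ≠ 0 := hqq n
    have h3 : qp q q n ≠ 0 := qp_ne_zero hqq n
    rw [hc]
    simp only
    rw [qp_succ q a n, qp_succ q q n, pow_succ', div_mul_eq_mul_div, div_mul_eq_mul_div,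
      div_eq_div_iff (mul_ne_zero h3 h2) h3]
    ring
  -- functional equation
  have FE : ∀ w : ℂ, ‖w‖ < 1 → (1 - w) * S w = (1 - a * w) * S (q * w) := by
    intro w hw
    have hqw : ‖q * w‖ < 1 := by
      rw [norm_mul]
      calc ‖q‖ * ‖w‖ ≤ 1 * ‖w‖ := mul_le_mul_of_nonneg_right hq.le (norm_nonneg w)
        _ < 1 := by rwa [one_mul]
    have s1 : Summable fun n : ℕ => c n * w ^ n := (hsum w hw).of_norm
    have s2 : Summable fun n : ℕ => c n * (q * w) ^ n := (hsum _ hqw).of_norm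
    have e1 : (1 - w) * S w = ∑' n : ℕ, (1 - w) * (c n * w ^ n) :=
      (s1.tsum_mul_left _).symm
    have e2 : (1 - a * w) * S (q * w) = ∑' n : ℕ, (1 - a * w) * (c n * (q * w) ^ n) :=
      (s2.tsum_mul_left _).symm
    rw [e1, e2]
    set u : ℕ → ℂ := fun n => c n * (1 - q ^ n) * w ^ n with hu
    set v : ℕ → ℂ := fun n => c n * (1 - a * q ^ n) * w ^ (n + 1) with hv
    have su : Summable u := by
      have : u = fun n => c n * w ^ n - c n * (q * w) ^ n := by
        funext n; rw [hu]; simp only [mul_pow]; ring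
      rw [this]; exact s1.sub s2
    have sv : Summable v := by
      have : v = fun n => w * (c n * w ^ n) - (a * w) * (c n * (q * w) ^ n) := by
        funext n; rw [hv]; simp only [mul_pow]; ring
      rw [this]; exact (s1.mul_left w).sub (s2.mul_left (a * w))
    have huv : ∑' n, u n = ∑' n, v n := by
      rw [Summable.tsum_eq_zero_add su]
      have hu0 : u 0 = 0 := by rw [hu]; simp
      rw [hu0, zero_add]
      apply tsum_congr
      intro n
      rw [hu, hv]
      simp only
      rw [show c (n+1) * (1 - q ^ (n+1)) * w ^ (n+1) = (c (n+1) * (1 - q ^ (n+1))) * w ^ (n+1) by ring,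
        key n]
    have hfg : ∀ n : ℕ, (1 - w) * (c n * w ^ n) - (1 - a * w) * (c n * (q * w) ^ n)
        = u n - v n := by
      intro n
      rw [hu, hv]
      simp only [mul_pow]
      ring
    have : ∑' n : ℕ, (1 - w) * (c n * w ^ n) - ∑' n : ℕ, (1 - a * w) * (c n * (q * w) ^ n) = 0 := by
      rw [← Summable.tsum_sub (s1.mul_left _) (s2.mul_left _)]
      calc ∑' n : ℕ, ((1 - w) * (c n * w ^ n) - (1 - a * w) * (c n * (q * w) ^ n))
          = ∑' n : ℕ, (u n - v n) := tsum_congr hfg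
        _ = ∑' n, u n - ∑' n, v n := Summable.tsum_sub su sv
        _ = 0 := by rw [huv, sub_self]
    exact sub_eq_zero.mp this
  -- iteration
  have iter : ∀ N : ℕ, qp q z N * S z = qp q (a * z) N * S (q ^ N * z) := by
    intro N
    induction N with
    | zero => simp [qp]
    | succ N ih =>
      have hw : ‖q ^ N * z‖ < 1 := by
        rw [norm_mul, norm_pow]
        calc ‖q‖ ^ N * ‖z‖ ≤ 1 * ‖z‖ :=
          mul_le_mul_of_nonneg_right (pow_le_one₀ (norm_nonneg q) hq.le) (norm_nonneg z)
        _ < 1 := by rwa [one_mul]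
      have hFE := FE (q ^ N * z) hw
      rw [qp_succ, qp_succ]
      calc qp q z N * (1 - z * q ^ N) * S z
          = (1 - z * q ^ N) * (qp q z N * S z) := by ring
        _ = (1 - z * q ^ N) * (qp q (a * z) N * S (q ^ N * z)) := by rw [ih]
        _ = qp q (a * z) N * ((1 - q ^ N * z) * S (q ^ N * z)) := by ring
        _ = qp q (a * z) N * ((1 - a * (q ^ N * z)) * S (q * (q ^ N * z))) := by rw [hFE]
        _ = qp q (a * z) N * (1 - a * z * q ^ N) * S (q ^ (N + 1) * z) := by
            rw [show q * (q ^ N * z) = q ^ (N + 1) * z by ring]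
            ring
  -- limits
  have tendS : Tendsto (fun N : ℕ => S (q ^ N * z)) atTop (𝓝 1) := by
    rw [tendsto_iff_norm_sub_tendsto_zero]
    apply squeeze_zero (fun N => norm_nonneg _)
      (g := fun N => A / B * ‖z‖ * (1 - ‖z‖)⁻¹ * ‖q‖ ^ N)
    · intro N
      set w := q ^ N * z with hwdef
      have hwz : ‖w‖ = ‖q‖ ^ N * ‖z‖ := by rw [hwdef, norm_mul, norm_pow]
      have hwle : ‖w‖ ≤ ‖z‖ := by
        rw [hwz]
        calc ‖q‖ ^ N * ‖z‖ ≤ 1 * ‖z‖ :=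
          mul_le_mul_of_nonneg_right (pow_le_one₀ (norm_nonneg q) hq.le) (norm_nonneg z)
        _ = ‖z‖ := one_mul _
      have hw1 : ‖w‖ < 1 := lt_of_le_of_lt hwle hz
      have ssum : Summable fun n : ℕ => c n * w ^ n := (hsum w hw1).of_norm
      have hS1 : S w = 1 + ∑' n : ℕ, c (n + 1) * w ^ (n + 1) := by
        rw [hS]
        simp only
        rw [Summable.tsum_eq_zero_add ssum]
        congr 1
        rw [hc]; simp [qp]
      have htail : ‖S w - 1‖ ≤ A / B * ‖z‖ * (1 - ‖z‖)⁻¹ * ‖q‖ ^ N := by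
        rw [hS1, add_sub_cancel_left]
        have hts : Summable fun n : ℕ => ‖c (n + 1) * w ^ (n + 1)‖ := by
          have := hsum w hw1
          exact ((summable_nat_add_iff 1).mpr this)
        refine (norm_tsum_le_tsum_norm hts).trans ?_
        have hbd : ∀ n : ℕ, ‖c (n + 1) * w ^ (n + 1)‖ ≤
            (A / B * (‖q‖ ^ N * ‖z‖)) * ‖z‖ ^ n := by
          intro n
          rw [norm_mul, norm_pow, pow_succ']
          have h1 : ‖c (n + 1)‖ ≤ A / B := hcb (n + 1)
          have h2 : ‖w‖ * ‖w‖ ^ n ≤ (‖q‖ ^ N * ‖z‖) * ‖z‖ ^ n := by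
            apply mul_le_mul (le_of_eq hwz) (pow_le_pow_left₀ (norm_nonneg w) hwle n)
              (pow_nonneg (norm_nonneg w) n)
            positivity
          calc ‖c (n + 1)‖ * (‖w‖ * ‖w‖ ^ n) ≤ A / B * ((‖q‖ ^ N * ‖z‖) * ‖z‖ ^ n) :=
            mul_le_mul h1 h2 (by positivity) hAB
          _ = (A / B * (‖q‖ ^ N * ‖z‖)) * ‖z‖ ^ n := by ring
        have hgs : Summable fun n : ℕ => (A / B * (‖q‖ ^ N * ‖z‖)) * ‖z‖ ^ n :=
          (summable_geometric_of_lt_one (norm_nonneg z) hz).mul_left _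
        refine (Summable.tsum_le_tsum hbd hts hgs).trans ?_
        rw [(summable_geometric_of_lt_one (norm_nonneg z) hz).tsum_mul_left
            (A / B * (‖q‖ ^ N * ‖z‖)),
          tsum_geometric_of_lt_one (norm_nonneg z) hz]
        apply le_of_eq
        ring
      exact htail
    · have : Tendsto (fun N : ℕ => ‖q‖ ^ N) atTop (𝓝 0) :=
        tendsto_pow_atTop_nhds_zero_of_lt_one (norm_nonneg q) hq
      have h := this.const_mul (A / B * ‖z‖ * (1 - ‖z‖)⁻¹)
      rwa [mul_zero] at h
  have t1 : Tendsto (fun N : ℕ => qp q z N * S z) atTop (𝓝 (qpi q z * S z)) :=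
    (qp_tendsto hq hz').mul_const _
  have t2 : Tendsto (fun N : ℕ => qp q (a * z) N * S (q ^ N * z)) atTop
      (𝓝 (qpi q (a * z) * 1)) :=
    (qp_tendsto hq haz).mul tendS
  have heq : qpi q z * S z = qpi q (a * z) * 1 := by
    apply tendsto_nhds_unique _ t2
    exact t1.congr fun N => iter N
  have hqpiz : qpi q z ≠ 0 := qpi_ne_zero hq hz'
  constructor
  · exact hsum z hz
  · rw [mul_one] at heq
    rw [hS] at heq
    simp only at heq
    rw [eq_div_iff hqpiz]
    rw [← heq]
    ring

set_option maxHeartbeats 1600000 in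
/-- The series transformation used in the proof of Theorem 1.2. -/
theorem stmt13 (q β γ t : ℂ) (hq : ‖q‖ < 1) (hβ0 : 0 < ‖β‖)
    (hβ1 : ‖β‖ < 1) (hγ0 : γ ≠ 0) (hγ : ‖γ‖ < 1)
    (hβt : ‖β * t ^ 2‖ < 1) (hγt : ‖γ * t ^ 2‖ < 1)
    (hβq : ∀ k : ℕ, 1 ≤ k → β * q ^ k ≠ 1) (m : ℕ) :
    Summable (fun n : ℕ =>
        ‖qp q (q * β / γ) n * qpi q (γ * t ^ 2 * q ^ n) /
            (qp q q n * qpi q (β * t ^ 2 * q ^ n)) * (γ * q ^ m) ^ n‖) ∧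
    Summable (fun j : ℕ =>
        ‖qp q (γ / β) j * qp q γ (m + j) / (qp q q j * qp q β (m + j + 1)) * β ^ j *
          t ^ (2 * j)‖) ∧
    ∑' n : ℕ,
        qp q (q * β / γ) n * qpi q (γ * t ^ 2 * q ^ n) /
          (qp q q n * qpi q (β * t ^ 2 * q ^ n)) * (γ * q ^ m) ^ n =
      qpi q β / qpi q γ *
        ∑' j : ℕ,
          qp q (γ / β) j * qp q γ (m + j) / (qp q q j * qp q β (m + j + 1)) * β ^ j *
            t ^ (2 * j) := by

  have hq' : ‖q‖ < 1 := by exact hq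
  have hβ1' : ‖β‖ < 1 := by exact hβ1
  have hγ' : ‖γ‖ < 1 := by exact hγ
  have hβt' : ‖β * t ^ 2‖ < 1 := by exact hβt
  have hβ0' : β ≠ 0 := by
    intro h; rw [h] at hβ0; simp at hβ0
  -- small-norm nonvanishing
  have hsmall : ∀ {w : ℂ}, ‖w‖ < 1 → ∀ k : ℕ, 1 - w * q ^ k ≠ 0 := by
    intro w hw k
    apply one_sub_ne'
    rw [norm_mul, norm_pow]
    calc ‖w‖ * ‖q‖ ^ k ≤ ‖w‖ * 1 :=
      mul_le_mul_of_nonneg_left (pow_le_one₀ (norm_nonneg q) hq'.le) (norm_nonneg w)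
    _ < 1 := by rwa [mul_one]
  have hγfac : ∀ k : ℕ, 1 - γ * q ^ k ≠ 0 := hsmall hγ'
  have hβfac : ∀ k : ℕ, 1 - β * q ^ k ≠ 0 := by
    intro k
    cases k with
    | zero =>
      rw [pow_zero, mul_one]
      exact one_sub_ne' hβ1'
    | succ k => exact sub_ne_zero.mpr (Ne.symm (hβq (k + 1) (by omega)))
  have hqq : ∀ k : ℕ, 1 - q * q ^ k ≠ 0 := fun k => hsmall hq' k
  -- per-n small-norm facts
  have hβtq : ∀ n : ℕ, ‖β * t ^ 2 * q ^ n‖ < 1 := by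
    intro n
    rw [norm_mul, norm_pow]
    calc ‖β * t ^ 2‖ * ‖q‖ ^ n ≤ ‖β * t ^ 2‖ * 1 :=
      mul_le_mul_of_nonneg_left (pow_le_one₀ (norm_nonneg q) hq'.le) (norm_nonneg _)
    _ < 1 := by rwa [mul_one]
  have hγq : ∀ l : ℕ, ‖γ * q ^ l‖ < 1 := by
    intro l
    rw [norm_mul, norm_pow]
    calc ‖γ‖ * ‖q‖ ^ l ≤ ‖γ‖ * 1 :=
      mul_le_mul_of_nonneg_left (pow_le_one₀ (norm_nonneg q) hq'.le) (norm_nonneg _)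
    _ < 1 := by rwa [mul_one]
  -- the double family
  set F : ℕ → ℕ → ℂ := fun n j =>
    qp q (q * β / γ) n / qp q q n * (γ * q ^ m) ^ n *
      (qp q (γ / β) j / qp q q j * (β * t ^ 2 * q ^ n) ^ j) with hF
  -- global norm bound
  obtain ⟨B, hB0, hB⟩ := qp_norm_lower hq' hqq
  set A₁ := Real.exp (‖q * β / γ‖ * (1 - ‖q‖)⁻¹) with hA₁
  set A₂ := Real.exp (‖γ / β‖ * (1 - ‖q‖)⁻¹) with hA₂
  have hA₁0 : 0 < A₁ := Real.exp_pos _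
  have hA₂0 : 0 < A₂ := Real.exp_pos _
  have hFb : ∀ p : ℕ × ℕ, ‖F p.1 p.2‖ ≤
      A₁ / B * (A₂ / B) * (‖γ‖ ^ p.1 * ‖β * t ^ 2‖ ^ p.2) := by
    rintro ⟨n, j⟩
    show ‖F n j‖ ≤ A₁ / B * (A₂ / B) * (‖γ‖ ^ n * ‖β * t ^ 2‖ ^ j)
    rw [hF]
    simp only
    rw [norm_mul, norm_mul, norm_mul]
    have b1 : ‖qp q (q * β / γ) n / qp q q n‖ ≤ A₁ / B := by
      rw [norm_div]; exact div_le_div₀ hA₁0.le (qp_norm_le hq' _ n) hB0 (hB n)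
    have b2 : ‖qp q (γ / β) j / qp q q j‖ ≤ A₂ / B := by
      rw [norm_div]; exact div_le_div₀ hA₂0.le (qp_norm_le hq' _ j) hB0 (hB j)
    have b3 : ‖(γ * q ^ m) ^ n‖ ≤ ‖γ‖ ^ n := by
      rw [norm_pow]
      apply pow_le_pow_left₀ (norm_nonneg _) _ n
      rw [norm_mul, norm_pow]
      calc ‖γ‖ * ‖q‖ ^ m ≤ ‖γ‖ * 1 :=
        mul_le_mul_of_nonneg_left (pow_le_one₀ (norm_nonneg q) hq'.le) (norm_nonneg _)
      _ = ‖γ‖ := mul_one _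
    have b4 : ‖(β * t ^ 2 * q ^ n) ^ j‖ ≤ ‖β * t ^ 2‖ ^ j := by
      rw [norm_pow]
      apply pow_le_pow_left₀ (norm_nonneg _) _ j
      rw [norm_mul, norm_pow]
      calc ‖β * t ^ 2‖ * ‖q‖ ^ n ≤ ‖β * t ^ 2‖ * 1 :=
        mul_le_mul_of_nonneg_left (pow_le_one₀ (norm_nonneg q) hq'.le) (norm_nonneg _)
      _ = ‖β * t ^ 2‖ := mul_one _
    calc ‖qp q (q * β / γ) n / qp q q n‖ * ‖(γ * q ^ m) ^ n‖ *
          (‖qp q (γ / β) j / qp q q j‖ * ‖(β * t ^ 2 * q ^ n) ^ j‖)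
        ≤ A₁ / B * ‖γ‖ ^ n * (A₂ / B * ‖β * t ^ 2‖ ^ j) :=
          mul_le_mul (mul_le_mul b1 b3 (norm_nonneg _) (by positivity))
            (mul_le_mul b2 b4 (norm_nonneg _) (by positivity))
            (by positivity) (by positivity)
      _ = A₁ / B * (A₂ / B) * (‖γ‖ ^ n * ‖β * t ^ 2‖ ^ j) := by ring
  have hFnorm : Summable fun p : ℕ × ℕ => ‖F p.1 p.2‖ := by
    apply Summable.of_nonneg_of_le (fun p => norm_nonneg _) hFb
    exact ((summable_geometric_of_lt_one (norm_nonneg γ) hγ').mul_of_nonneg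
      (summable_geometric_of_lt_one (norm_nonneg _) hβt')
      (fun n => pow_nonneg (norm_nonneg _) _)
      (fun j => pow_nonneg (norm_nonneg _) _)).mul_left _
  have hFsum : Summable (fun p : ℕ × ℕ => F p.1 p.2) := hFnorm.of_norm
  -- row sums
  have hred : ∀ n : ℕ, γ / β * (β * t ^ 2 * q ^ n) = γ * t ^ 2 * q ^ n := by
    intro n; field_simp
  have qbrow : ∀ n : ℕ,
      Summable (fun j : ℕ => ‖qp q (γ / β) j / qp q q j * (β * t ^ 2 * q ^ n) ^ j‖) ∧
        ∑' j : ℕ, qp q (γ / β) j / qp q q j * (β * t ^ 2 * q ^ n) ^ j =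
          qpi q (γ * t ^ 2 * q ^ n) / qpi q (β * t ^ 2 * q ^ n) := by
    intro n
    have haz : ∀ k, 1 - γ / β * (β * t ^ 2 * q ^ n) * q ^ k ≠ 0 := by
      intro k
      rw [hred n]
      apply hsmall _ k
      rw [norm_mul, norm_pow]
      calc ‖γ * t ^ 2‖ * ‖q‖ ^ n ≤ ‖γ * t ^ 2‖ * 1 :=
        mul_le_mul_of_nonneg_left (pow_le_one₀ (norm_nonneg q) hq'.le) (norm_nonneg _)
      _ < 1 := by rw [mul_one]; exact hγt
    obtain ⟨h1, h2⟩ := qbinom_s13 hq' (γ / β) (hβtq n) haz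
    rw [hred n] at h2
    exact ⟨h1, h2⟩
  have row : ∀ n : ℕ, ∑' j : ℕ, F n j =
      qp q (q * β / γ) n * qpi q (γ * t ^ 2 * q ^ n) /
        (qp q q n * qpi q (β * t ^ 2 * q ^ n)) * (γ * q ^ m) ^ n := by
    intro n
    have hs : Summable fun j : ℕ => qp q (γ / β) j / qp q q j * (β * t ^ 2 * q ^ n) ^ j :=
      (qbrow n).1.of_norm
    rw [hF]
    simp only
    rw [hs.tsum_mul_left, (qbrow n).2, ← div_mul_div_comm]
    ring
  -- termwise rearrangement for columns
  have termwise : ∀ n j : ℕ, F n j =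
      qp q (γ / β) j / qp q q j * (β * t ^ 2) ^ j *
        (qp q (q * β / γ) n / qp q q n * (γ * q ^ (m + j)) ^ n) := by
    intro n j
    rw [hF]
    simp only [mul_pow, ← pow_mul]
    ring
  have hred2 : ∀ j : ℕ, q * β / γ * (γ * q ^ (m + j)) = β * q ^ (m + j + 1) := by
    intro j; field_simp; ring
  have qbcol : ∀ j : ℕ,
      Summable (fun n : ℕ => qp q (q * β / γ) n / qp q q n * (γ * q ^ (m + j)) ^ n) ∧
        ∑' n : ℕ, qp q (q * β / γ) n / qp q q n * (γ * q ^ (m + j)) ^ n =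
          qpi q (β * q ^ (m + j + 1)) / qpi q (γ * q ^ (m + j)) := by
    intro j
    have haz : ∀ k, 1 - q * β / γ * (γ * q ^ (m + j)) * q ^ k ≠ 0 := by
      intro k
      rw [hred2 j, mul_assoc, ← pow_add]
      exact hβfac (m + j + 1 + k)
    obtain ⟨h1, h2⟩ := qbinom_s13 hq' (q * β / γ) (hγq (m + j)) haz
    rw [hred2 j] at h2
    exact ⟨h1.of_norm, h2⟩
  have qpiγ_ne : qpi q γ ≠ 0 := qpi_ne_zero hq' hγfac
  have qpiβ_ne : qpi q β ≠ 0 := qpi_ne_zero hq' hβfac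
  have col : ∀ j : ℕ, ∑' n : ℕ, F n j =
      qpi q β / qpi q γ *
        (qp q (γ / β) j * qp q γ (m + j) / (qp q q j * qp q β (m + j + 1)) * β ^ j *
          t ^ (2 * j)) := by
    intro j
    calc ∑' n : ℕ, F n j
        = ∑' n : ℕ, (qp q (γ / β) j / qp q q j * (β * t ^ 2) ^ j *
            (qp q (q * β / γ) n / qp q q n * (γ * q ^ (m + j)) ^ n)) :=
          tsum_congr fun n => termwise n j
      _ = qp q (γ / β) j / qp q q j * (β * t ^ 2) ^ j *
            ∑' n : ℕ, qp q (q * β / γ) n / qp q q n * (γ * q ^ (m + j)) ^ n :=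
          (qbcol j).1.tsum_mul_left _
      _ = qp q (γ / β) j / qp q q j * (β * t ^ 2) ^ j *
            (qpi q (β * q ^ (m + j + 1)) / qpi q (γ * q ^ (m + j))) := by rw [(qbcol j).2]
      _ = qpi q β / qpi q γ *
            (qp q (γ / β) j * qp q γ (m + j) / (qp q q j * qp q β (m + j + 1)) * β ^ j *
              t ^ (2 * j)) := by
          have h1 : qp q q j ≠ 0 := qp_ne_zero hqq j
          have h2 : qp q β (m + j + 1) ≠ 0 := qp_ne_zero hβfac _
          have h3 : qp q γ (m + j) ≠ 0 := qp_ne_zero hγfac _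
          have h4 : qpi q (γ * q ^ (m + j)) ≠ 0 := qpi_ne_zero hq'
            (fun k => by rw [mul_assoc, ← pow_add]; exact hγfac (m + j + k))
          have h5 : qpi q (β * q ^ (m + j + 1)) ≠ 0 := qpi_ne_zero hq'
            (fun k => by rw [mul_assoc, ← pow_add]; exact hβfac (m + j + 1 + k))
          have hpow : (β * t ^ 2) ^ j = β ^ j * t ^ (2 * j) := by
            rw [mul_pow, ← pow_mul]
          rw [qpi_split hq' hβfac (m + j + 1), qpi_split hq' hγfac (m + j), hpow]
          field_simp
  -- summability of the left-hand side
  have hFrownorm : ∀ n, Summable fun j => ‖F n j‖ := fun n => hFnorm.prod_factor n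
  have claim1 : Summable fun n : ℕ =>
      ‖qp q (q * β / γ) n * qpi q (γ * t ^ 2 * q ^ n) /
        (qp q q n * qpi q (β * t ^ 2 * q ^ n)) * (γ * q ^ m) ^ n‖ := by
    refine Summable.of_nonneg_of_le (fun n => norm_nonneg _) (fun n => ?_) hFnorm.prod
    rw [← row n]
    exact norm_tsum_le_tsum_norm (hFrownorm n)
  -- summability of the right-hand side
  have hFswap : Summable fun p : ℕ × ℕ => ‖F p.2 p.1‖ := hFnorm.prod_symm
  have hsumcol : ∀ j, Summable fun n => ‖F n j‖ := fun j => hFswap.prod_factor j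
  have colsum : Summable fun j : ℕ => ∑' n : ℕ, ‖F n j‖ := hFswap.prod
  have hconst : qpi q γ / qpi q β * (qpi q β / qpi q γ) = 1 := by
    field_simp
  have rhsval : ∀ j : ℕ,
      qp q (γ / β) j * qp q γ (m + j) / (qp q q j * qp q β (m + j + 1)) * β ^ j * t ^ (2 * j)
        = qpi q γ / qpi q β * ∑' n : ℕ, F n j := by
    intro j
    rw [col j, ← mul_assoc, hconst, one_mul]
  have claim2 : Summable fun j : ℕ =>
      ‖qp q (γ / β) j * qp q γ (m + j) / (qp q q j * qp q β (m + j + 1)) * β ^ j *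
        t ^ (2 * j)‖ := by
    refine Summable.of_nonneg_of_le (fun j => norm_nonneg _) (fun j => ?_)
      (colsum.mul_left ‖qpi q γ / qpi q β‖)
    rw [rhsval j, norm_mul]
    exact mul_le_mul_of_nonneg_left (norm_tsum_le_tsum_norm (hsumcol j)) (norm_nonneg _)
  refine ⟨claim1, claim2, ?_⟩
  have huncurry : Summable (Function.uncurry F) := hFsum
  calc ∑' n : ℕ, qp q (q * β / γ) n * qpi q (γ * t ^ 2 * q ^ n) /
        (qp q q n * qpi q (β * t ^ 2 * q ^ n)) * (γ * q ^ m) ^ n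
      = ∑' n : ℕ, ∑' j : ℕ, F n j := tsum_congr fun n => (row n).symm
    _ = ∑' j : ℕ, ∑' n : ℕ, F n j := (Summable.tsum_comm huncurry).symm
    _ = ∑' j : ℕ, (qpi q β / qpi q γ *
          (qp q (γ / β) j * qp q γ (m + j) / (qp q q j * qp q β (m + j + 1)) * β ^ j *
            t ^ (2 * j))) := tsum_congr fun j => col j
    _ = qpi q β / qpi q γ *
          ∑' j : ℕ, qp q (γ / β) j * qp q γ (m + j) / (qp q q j * qp q β (m + j + 1)) *
            β ^ j * t ^ (2 * j) := tsum_mul_left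
end
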